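/- arXiv:2012.00589 — 8 statements merged into one kernel-verified Lean document; each statement's English description precedes it below -/
import Mathlib

section
/- Let n, f, ℓ be positive integers with n ≥ 1 and f ≤ ℓ, and let C be any set of n wheel positions with C ⊆ {1, 2, …, f}. Then there exists a track T ⊆ {1, 2, …, ℓ} such that for every offset k ∈ {0, 1, …, ℓ − f} we have (C + k) ∩ T ≠ ∅, and such that |T| ≤ ℓ·(1 + ln n)/n. -/
open Finset


noncomputable def ttHh (m : ℕ) : ℝ := ((harmonic m : ℚ) : ℝ)

lemma ttHh_zero : ttHh 0 = 0 := by simp [ttHh]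

lemma ttHh_nonneg (m : ℕ) : 0 ≤ ttHh m := by
  unfold ttHh
  rcases Nat.eq_zero_or_pos m with h | h
  · simp [h]
  · exact_mod_cast (harmonic_pos h.ne').le

lemma ttHh_mono : Monotone ttHh := by
  intro a b hab
  unfold ttHh
  have : harmonic a ≤ harmonic b := by
    unfold harmonic
    apply Finset.sum_le_sum_of_subset_of_nonneg
    · exact Finset.range_subset_range.mpr hab
    · intro i _ _; positivity
  exact_mod_cast this

lemma ttHh_step (a b s : ℕ) (hs0 : 0 < s) (hab : a + b ≤ s) :
    (a : ℝ) / s + ttHh b ≤ ttHh (a + b) := by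
  induction a with
  | zero => simp
  | succ a ih =>
    have h1 : a + b ≤ s := by omega
    have h2 := ih h1
    have hsucc : ttHh (a + b + 1) = ttHh (a + b) + 1 / ((a : ℝ) + b + 1) := by
      unfold ttHh
      rw [harmonic_succ]
      push_cast
      ring
    have h3 : (1 : ℝ) / s ≤ 1 / ((a : ℝ) + b + 1) := by
      apply one_div_le_one_div_of_le
      · positivity
      · have : a + b + 1 ≤ s := by omega
        exact_mod_cast this
    have : (↑(a + 1) : ℝ) / s = (a : ℝ) / s + 1 / s := by push_cast; ring
    calc (↑(a + 1) : ℝ) / s + ttHh b = ((a : ℝ) / s + ttHh b) + 1 / s := by rw [this]; ring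
      _ ≤ ttHh (a + b) + 1 / ((a : ℝ) + b + 1) := add_le_add h2 h3
      _ = ttHh (a + b + 1) := hsucc.symm
      _ = ttHh (a + 1 + b) := by ring_nf


lemma tt_greedy (C P : Finset ℤ) (hCne : C.Nonempty) :
    ∀ N : ℕ, ∀ U : Finset ℤ, U.card ≤ N → (∀ k ∈ U, ∀ c ∈ C, c + k ∈ P) →
    ∃ T : Finset ℤ, T ⊆ P ∧ (∀ k ∈ U, ∃ x ∈ T, x - k ∈ C) ∧
      ∃ p : ℤ → ℝ, (∀ k, 0 ≤ p k) ∧ (∀ k, k ∉ U → p k = 0) ∧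
        ((T.card : ℝ) ≤ ∑ k ∈ U, p k) ∧
        (∀ x ∈ P, ∑ k ∈ U.filter (fun k => x - k ∈ C), p k
            ≤ ttHh (U.filter (fun k => x - k ∈ C)).card) := by
  intro N
  induction N with
  | zero =>
    intro U hU _
    have hU0 : U = ∅ := Finset.card_eq_zero.mp (Nat.le_zero.mp hU)
    subst hU0
    refine ⟨∅, by simp, by simp, fun _ => 0, by simp, by simp, by simp, ?_⟩
    intro x _
    simp [ttHh]
  | succ N ih =>
    intro U hU hcov
    rcases Finset.eq_empty_or_nonempty U with rfl | hUne
    · exact ih ∅ (by simp) (by simp)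
    -- U nonempty
    obtain ⟨k0, hk0⟩ := hUne
    obtain ⟨c0, hc0⟩ := hCne
    have hx0P : c0 + k0 ∈ P := hcov k0 hk0 c0 hc0
    have hPne : P.Nonempty := ⟨_, hx0P⟩
    obtain ⟨x, hxP, hxmax⟩ := P.exists_max_image
      (fun x => (U.filter (fun k => x - k ∈ C)).card) hPne
    set g : ℤ → ℕ := fun x => (U.filter (fun k => x - k ∈ C)).card with hg
    set s : ℕ := g x with hs
    have hs1 : 1 ≤ s := by
      have hk0' : k0 ∈ U.filter (fun k => (c0 + k0) - k ∈ C) := by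
        simp only [Finset.mem_filter]
        exact ⟨hk0, by simpa using hc0⟩
      have : 1 ≤ g (c0 + k0) := Finset.card_pos.mpr ⟨k0, hk0'⟩
      exact le_trans this (hxmax _ hx0P)
    set U' : Finset ℤ := U.filter (fun k => ¬ (x - k ∈ C)) with hU'
    have hU'card : U'.card ≤ N := by
      have hsub : U' ⊆ U := Finset.filter_subset _ _
      have hkx : ∃ k ∈ U, x - k ∈ C := by
        have : (U.filter (fun k => x - k ∈ C)).Nonempty := Finset.card_pos.mp hs1
        obtain ⟨k, hk⟩ := this
        exact ⟨k, (Finset.mem_filter.mp hk).1, (Finset.mem_filter.mp hk).2⟩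
      obtain ⟨k, hkU, hkC⟩ := hkx
      have : U'.card < U.card := by
        apply Finset.card_lt_card
        refine ⟨hsub, fun hUU' => ?_⟩
        have := hUU' hkU
        rw [hU', Finset.mem_filter] at this
        exact this.2 hkC
      omega
    obtain ⟨T', hT'P, hhit', p', hp0', hsupp', hcard', hinv'⟩ :=
      ih U' hU'card (fun k hk c hc => hcov k (Finset.filter_subset _ _ hk) c hc)
    refine ⟨insert x T', Finset.insert_subset hxP hT'P, ?_, ?_⟩
    · intro k hkU
      by_cases hkC : x - k ∈ C
      · exact ⟨x, Finset.mem_insert_self _ _, hkC⟩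
      · obtain ⟨y, hyT, hyC⟩ := hhit' k (Finset.mem_filter.mpr ⟨hkU, hkC⟩)
        exact ⟨y, Finset.mem_insert_of_mem hyT, hyC⟩
    set p : ℤ → ℝ := fun k => if x - k ∈ C ∧ k ∈ U then 1 / (s : ℝ) else p' k with hp
    have hpU' : ∀ k ∈ U', p k = p' k := by
      intro k hk
      rw [hU', Finset.mem_filter] at hk
      simp only [hp]
      rw [if_neg]
      tauto
    refine ⟨p, ?_, ?_, ?_, ?_⟩
    · intro k
      simp only [hp]
      split
      · positivity
      · exact hp0' k
    · intro k hk
      simp only [hp]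
      rw [if_neg (by tauto)]
      exact hsupp' k (fun h => hk (Finset.filter_subset _ _ h))
    · -- cardinality
      have hsplit : ∑ k ∈ U, p k
          = ∑ k ∈ U.filter (fun k => x - k ∈ C), p k + ∑ k ∈ U', p k :=
        (Finset.sum_filter_add_sum_filter_not U _ p).symm
      have hsne : (s : ℝ) ≠ 0 := by positivity
      have h1 : ∑ k ∈ U.filter (fun k => x - k ∈ C), p k = 1 := by
        have heq : ∀ k ∈ U.filter (fun k => x - k ∈ C), p k = 1 / (s : ℝ) := by
          intro k hk
          rw [Finset.mem_filter] at hk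
          simp only [hp]
          rw [if_pos ⟨hk.2, hk.1⟩]
        rw [Finset.sum_congr rfl heq, Finset.sum_const, nsmul_eq_mul]
        have hcs : ((U.filter (fun k => x - k ∈ C)).card : ℝ) = (s : ℝ) := rfl
        rw [hcs]
        field_simp
      have h2 : ∑ k ∈ U', p k = ∑ k ∈ U', p' k :=
        Finset.sum_congr rfl hpU'
      rw [hsplit, h1, h2]
      have : ((insert x T').card : ℝ) ≤ (T'.card : ℝ) + 1 := by
        have := Finset.card_insert_le x T'
        exact_mod_cast this
      linarith
    · -- invariant
      intro x' hx'P
      set A : Finset ℤ := U.filter (fun k => x' - k ∈ C) with hA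
      have hsplitA : ∑ k ∈ A, p k
          = ∑ k ∈ A.filter (fun k => x - k ∈ C), p k
            + ∑ k ∈ A.filter (fun k => ¬ (x - k ∈ C)), p k :=
        (Finset.sum_filter_add_sum_filter_not A _ p).symm
      set a : ℕ := (A.filter (fun k => x - k ∈ C)).card with ha
      have hA2 : A.filter (fun k => ¬ (x - k ∈ C)) = U'.filter (fun k => x' - k ∈ C) := by
        ext k
        simp only [hA, hU', Finset.mem_filter]
        tauto
      set b : ℕ := (U'.filter (fun k => x' - k ∈ C)).card with hb
      have h1 : ∑ k ∈ A.filter (fun k => x - k ∈ C), p k = (a : ℝ) / s := by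
        have heq : ∀ k ∈ A.filter (fun k => x - k ∈ C), p k = 1 / (s : ℝ) := by
          intro k hk
          simp only [hA, Finset.mem_filter] at hk
          simp only [hp]
          rw [if_pos ⟨hk.2, hk.1.1⟩]
        rw [Finset.sum_congr rfl heq, Finset.sum_const, nsmul_eq_mul]
        have hca : ((A.filter (fun k => x - k ∈ C)).card : ℝ) = (a : ℝ) := rfl
        rw [hca]
        ring
      have h2 : ∑ k ∈ A.filter (fun k => ¬ (x - k ∈ C)), p k ≤ ttHh b := by
        rw [hA2]
        rw [Finset.sum_congr rfl (fun k hk => hpU' k (Finset.filter_subset _ _ hk))]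
        exact hinv' x' hx'P
      have hab : a + b = A.card := by
        rw [ha, hb, ← hA2]
        exact Finset.card_filter_add_card_filter_not _
      have hAs : A.card ≤ s := hxmax x' hx'P
      have := ttHh_step a b s hs1 (by omega)
      rw [hsplitA, h1]
      calc (a : ℝ) / s + ∑ k ∈ A.filter (fun k => ¬ (x - k ∈ C)), p k
          ≤ (a : ℝ) / s + ttHh b := by linarith
        _ ≤ ttHh (a + b) := this
        _ = ttHh A.card := by rw [hab]


/-- **Upper bound.** For any configuration of `n` wheels `C ⊆ {1, …, f}`, there is a track
`T ⊆ {1, …, ℓ}` supporting `C` at every offset `k ∈ {0, …, ℓ - f}` with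
`|T| ≤ ℓ·(1 + ln n)/n`. -/
theorem train_track_upper_bound (n f ℓ : ℕ) (hn : 1 ≤ n) (hf : 0 < f) (hℓ : 0 < ℓ)
    (hfl : f ≤ ℓ) (C : Finset ℤ) (hC : C ⊆ Finset.Icc 1 (f : ℤ)) (hCcard : C.card = n) :
    ∃ T ⊆ Finset.Icc (1 : ℤ) (ℓ : ℤ),
      (∀ k ∈ Finset.Icc (0 : ℤ) ((ℓ : ℤ) - (f : ℤ)),
        ((C.image (fun c => c + k)) ∩ T).Nonempty) ∧
      (T.card : ℝ) ≤ (ℓ : ℝ) * (1 + Real.log n) / n := by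
  set P : Finset ℤ := Finset.Icc (1 : ℤ) (ℓ : ℤ) with hP
  set U : Finset ℤ := Finset.Icc (0 : ℤ) ((ℓ : ℤ) - (f : ℤ)) with hU
  have hCne : C.Nonempty := Finset.card_pos.mp (by omega)
  have hcov : ∀ k ∈ U, ∀ c ∈ C, c + k ∈ P := by
    intro k hk c hc
    have hc' := hC hc
    rw [Finset.mem_Icc] at hc' ⊢
    rw [hU, Finset.mem_Icc] at hk
    omega
  obtain ⟨T, hTP, hhit, p, hp0, hsupp, hcard, hinv⟩ :=
    tt_greedy C P hCne U.card U (le_refl _) hcov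
  refine ⟨T, hTP, ?_, ?_⟩
  · intro k hk
    obtain ⟨x, hxT, hxC⟩ := hhit k hk
    refine ⟨x, Finset.mem_inter.mpr ⟨?_, hxT⟩⟩
    exact Finset.mem_image.mpr ⟨x - k, hxC, by ring⟩
  · -- cardinality bound
    have hPcard : P.card = ℓ := by
      rw [hP, Int.card_Icc]
      simp
    -- each offset k ∈ U is covered by exactly n points of P
    have hfib : ∀ k ∈ U, (P.filter (fun x => x - k ∈ C)).card = n := by
      intro k hk
      have : P.filter (fun x => x - k ∈ C) = C.image (fun c => c + k) := by
        ext x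
        simp only [Finset.mem_filter, Finset.mem_image]
        constructor
        · rintro ⟨_, hxk⟩
          exact ⟨x - k, hxk, by ring⟩
        · rintro ⟨c, hc, rfl⟩
          exact ⟨hcov k hk c hc, by simpa using hc⟩
      rw [this, Finset.card_image_of_injective _ (add_left_injective k), hCcard]
    -- double counting
    have hdouble : (n : ℝ) * ∑ k ∈ U, p k
        = ∑ x ∈ P, ∑ k ∈ U.filter (fun k => x - k ∈ C), p k := by
      have h1 : ∀ x, ∑ k ∈ U.filter (fun k => x - k ∈ C), p k
          = ∑ k ∈ U, if x - k ∈ C then p k else 0 := by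
        intro x
        rw [Finset.sum_filter]
      simp_rw [h1]
      rw [Finset.sum_comm]
      rw [Finset.mul_sum]
      apply Finset.sum_congr rfl
      intro k hk
      have h2 : ∑ x ∈ P, (if x - k ∈ C then p k else 0)
          = ((P.filter (fun x => x - k ∈ C)).card : ℝ) * p k := by
        rw [← Finset.sum_filter, Finset.sum_const, nsmul_eq_mul]
      rw [h2, hfib k hk]
    -- each inner sum bounded by ttHh n
    have hbound : ∀ x ∈ P, ∑ k ∈ U.filter (fun k => x - k ∈ C), p k ≤ ttHh n := by
      intro x hx
      refine (hinv x hx).trans (ttHh_mono ?_)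
      have hle : (U.filter (fun k => x - k ∈ C)).card ≤ C.card := by
        apply Finset.card_le_card_of_injOn (fun k => x - k)
        · intro k hk
          exact (Finset.mem_filter.mp hk).2
        · intro a _ b _ h
          simp only at h
          omega
      omega
    have hsum : (n : ℝ) * ∑ k ∈ U, p k ≤ (ℓ : ℝ) * ttHh n := by
      rw [hdouble]
      calc ∑ x ∈ P, ∑ k ∈ U.filter (fun k => x - k ∈ C), p k
          ≤ ∑ _x ∈ P, ttHh n := Finset.sum_le_sum hbound
        _ = (P.card : ℝ) * ttHh n := by rw [Finset.sum_const, nsmul_eq_mul]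
        _ = (ℓ : ℝ) * ttHh n := by rw [hPcard]
    have hH : ttHh n ≤ 1 + Real.log n := by
      unfold ttHh
      exact harmonic_le_one_add_log n
    have hnpos : (0 : ℝ) < n := by exact_mod_cast hn
    have hℓ0 : (0 : ℝ) ≤ ℓ := by positivity
    rw [le_div_iff₀ hnpos]
    have h3 : (ℓ : ℝ) * ttHh n ≤ (ℓ : ℝ) * (1 + Real.log n) :=
      mul_le_mul_of_nonneg_left hH hℓ0
    have h4 : (n : ℝ) * (T.card : ℝ) ≤ (n : ℝ) * ∑ k ∈ U, p k :=
      mul_le_mul_of_nonneg_left hcard hnpos.le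
    nlinarith
end

section
/- There exists n₀ such that for every integer n ≥ n₀ the following holds: there exists a set C ⊆ {1, 2, …, 2n} with |C| ≥ n such that every track T ⊆ {1, 2, …, 4n} satisfying (C + k) ∩ T ≠ ∅ for all k ∈ {0, 1, …, 2n} must have |T| > (ln n)/4. -/
set_option maxHeartbeats 1000000

open Finset

open Finset

/-- Counting lemma: subsets of `S` hitting each of a family of pairwise disjoint
subsets `A k ⊆ S`, `k ∈ K`. -/
lemma count_lemma (K : Finset ℤ) : ∀ (S : Finset ℤ) (A : ℤ → Finset ℤ),
    (∀ k ∈ K, A k ⊆ S) →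
    (∀ k ∈ K, ∀ k' ∈ K, k ≠ k' → Disjoint (A k) (A k')) →
    (S.powerset.filter (fun C => ∀ k ∈ K, (C ∩ A k).Nonempty)).card ≤
      2 ^ (S.card - ∑ k ∈ K, (A k).card) * ∏ k ∈ K, (2 ^ (A k).card - 1) := by
  classical
  induction K using Finset.induction_on with
  | empty =>
    intro S A _ _
    simp
  | @insert a K' ha ih =>
    intro S A hsub hdisj
    have haS : A a ⊆ S := hsub a (mem_insert_self a K')
    -- injection C ↦ (C ∩ A a, C \ A a)
    have hinj : (S.powerset.filter (fun C => ∀ k ∈ insert a K', (C ∩ A k).Nonempty)).card ≤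
        (((A a).powerset.filter (fun X => X.Nonempty)) ×ˢ
          ((S \ A a).powerset.filter (fun C => ∀ k ∈ K', (C ∩ A k).Nonempty))).card := by
      apply Finset.card_le_card_of_injOn (fun C => (C ∩ A a, C \ A a))
      · intro C hC
        simp only [Finset.mem_coe, mem_filter, mem_powerset] at hC
        obtain ⟨hCS, hne⟩ := hC
        simp only [Finset.mem_coe, mem_product, mem_filter, mem_powerset]
        refine ⟨⟨inter_subset_right, hne a (mem_insert_self a K')⟩, ?_, ?_⟩
        · intro x hx
          simp only [mem_sdiff] at hx ⊢
          exact ⟨hCS hx.1, hx.2⟩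
        · intro k hk
          obtain ⟨x, hx⟩ := hne k (mem_insert_of_mem hk)
          simp only [mem_inter] at hx
          refine ⟨x, ?_⟩
          simp only [mem_inter, mem_sdiff]
          have hka : a ≠ k := by rintro rfl; exact ha hk
          have hd := hdisj a (mem_insert_self a K') k (mem_insert_of_mem hk) hka
          exact ⟨⟨hx.1, fun hxa => (Finset.disjoint_left.mp hd hxa) hx.2⟩, hx.2⟩
      · intro C hC C' hC' hEq
        simp only [Prod.mk.injEq] at hEq
        have key : ∀ Y : Finset ℤ, Y ∩ A a ∪ Y \ A a = Y := by
          intro Y; ext x; by_cases hx : x ∈ A a <;> simp [hx]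
        have : C ∩ A a ∪ C \ A a = C' ∩ A a ∪ C' \ A a := by rw [hEq.1, hEq.2]
        rwa [key, key] at this
    rw [Finset.card_product] at hinj
    have hX : ((A a).powerset.filter (fun X => X.Nonempty)).card = 2 ^ (A a).card - 1 := by
      have : (A a).powerset.filter (fun X => X.Nonempty) = (A a).powerset.erase ∅ := by
        ext X
        simp [Finset.nonempty_iff_ne_empty, and_comm]
      rw [this, Finset.card_erase_of_mem (Finset.empty_mem_powerset _), Finset.card_powerset]
    have hY := ih (S \ A a) A
      (fun k hk => by
        intro x hx
        simp only [mem_sdiff]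
        have hka : a ≠ k := by rintro rfl; exact ha hk
        have hd := hdisj a (mem_insert_self a K') k (mem_insert_of_mem hk) hka
        exact ⟨hsub k (mem_insert_of_mem hk) hx, fun hxa => (Finset.disjoint_left.mp hd hxa) hx⟩)
      (fun k hk k' hk' hne => hdisj k (mem_insert_of_mem hk) k' (mem_insert_of_mem hk') hne)
    have hcard : (S \ A a).card = S.card - (A a).card := Finset.card_sdiff_of_subset haS
    calc (S.powerset.filter (fun C => ∀ k ∈ insert a K', (C ∩ A k).Nonempty)).card
        ≤ (2 ^ (A a).card - 1) * ((S \ A a).powerset.filter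
            (fun C => ∀ k ∈ K', (C ∩ A k).Nonempty)).card := by rw [hX] at hinj; exact hinj
      _ ≤ (2 ^ (A a).card - 1) * (2 ^ ((S \ A a).card - ∑ k ∈ K', (A k).card) *
            ∏ k ∈ K', (2 ^ (A k).card - 1)) := Nat.mul_le_mul_left _ hY
      _ = 2 ^ (S.card - ∑ k ∈ insert a K', (A k).card) * ∏ k ∈ insert a K', (2 ^ (A k).card - 1) := by
          rw [hcard, Finset.sum_insert ha, Finset.prod_insert ha, Nat.sub_sub]
          ring


open Finset

lemma exists_indep (K0 D : Finset ℤ) (hD0 : (0:ℤ) ∈ D)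
    (hDsymm : ∀ d ∈ D, -d ∈ D) :
    ∃ K ⊆ K0, (∀ k ∈ K, ∀ k' ∈ K, k ≠ k' → k - k' ∉ D) ∧ K0.card ≤ K.card * D.card := by
  classical
  set V := K0.powerset.filter (fun K => ∀ k ∈ K, ∀ k' ∈ K, k ≠ k' → k - k' ∉ D) with hV
  have hVne : V.Nonempty := ⟨∅, by simp [hV]⟩
  obtain ⟨K, hKV, hKmax⟩ := Finset.exists_max_image V Finset.card hVne
  simp only [hV, mem_filter, mem_powerset] at hKV
  obtain ⟨hKsub, hKind⟩ := hKV
  refine ⟨K, hKsub, hKind, ?_⟩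
  have hcover : K0 ⊆ K.biUnion (fun k => D.image (fun d => k + d)) := by
    intro k' hk'
    by_contra hk'n
    simp only [mem_biUnion, mem_image, not_exists, not_and] at hk'n
    have hk'K : k' ∉ K := by
      intro h
      exact hk'n k' h 0 hD0 (by ring)
    have hins : insert k' K ∈ V := by
      simp only [hV, mem_filter, mem_powerset]
      refine ⟨Finset.insert_subset hk' hKsub, ?_⟩
      intro a ha b hb hab
      rcases Finset.mem_insert.mp ha with rfl | ha'
      · rcases Finset.mem_insert.mp hb with rfl | hb'
        · exact absurd rfl hab
        · intro hd
          exact hk'n b hb' (a - b) hd (by ring)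
      · rcases Finset.mem_insert.mp hb with rfl | hb'
        · intro hd
          exact hk'n a ha' (-(a - b)) (hDsymm _ hd) (by ring)
        · exact hKind a ha' b hb' hab
    have := hKmax _ hins
    rw [Finset.card_insert_of_notMem hk'K] at this
    omega
  calc K0.card ≤ (K.biUnion (fun k => D.image (fun d => k + d))).card :=
        Finset.card_le_card hcover
    _ ≤ ∑ k ∈ K, (D.image (fun d => k + d)).card := Finset.card_biUnion_le
    _ ≤ ∑ _k ∈ K, D.card := Finset.sum_le_sum (fun k _ => Finset.card_image_le)
    _ = K.card * D.card := by rw [Finset.sum_const, smul_eq_mul]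

lemma small_count (S : Finset ℤ) :
    2 * (S.powerset.filter (fun C => 2 * C.card < S.card)).card ≤ 2 ^ S.card := by
  classical
  set B1 := S.powerset.filter (fun C => 2 * C.card < S.card) with hB1
  set B2 := S.powerset.filter (fun C => S.card < 2 * C.card) with hB2
  have hle : B1.card ≤ B2.card := by
    apply Finset.card_le_card_of_injOn (fun C => S \ C)
    · intro C hC
      simp only [Finset.mem_coe, hB1, mem_filter, mem_powerset] at hC
      simp only [Finset.mem_coe, hB2, mem_filter, mem_powerset]
      have hCS : C.card ≤ S.card := Finset.card_le_card hC.1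
      refine ⟨Finset.sdiff_subset, ?_⟩
      rw [Finset.card_sdiff_of_subset hC.1]
      omega
    · intro C hC C' hC' hEq
      simp only [hB1, Finset.coe_filter, Set.mem_setOf_eq, mem_powerset] at hC hC'
      have := congrArg (fun X => S \ X) hEq
      simpa [Finset.sdiff_sdiff_eq_self hC.1, Finset.sdiff_sdiff_eq_self hC'.1] using this
  have hdisj : Disjoint B1 B2 := by
    rw [Finset.disjoint_left]
    intro C h1 h2
    simp only [hB1, mem_filter] at h1
    simp only [hB2, mem_filter] at h2
    omega
  have hunion : (B1 ∪ B2).card ≤ 2 ^ S.card := by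
    calc (B1 ∪ B2).card ≤ S.powerset.card :=
        Finset.card_le_card (Finset.union_subset (Finset.filter_subset _ _) (Finset.filter_subset _ _))
      _ = 2 ^ S.card := Finset.card_powerset S
  rw [Finset.card_union_of_disjoint hdisj] at hunion
  omega

lemma track_count (W : Finset ℤ) (m : ℕ) (hW : 1 ≤ W.card) :
    (W.powerset.filter (fun T => T.card ≤ m)).card ≤ (m + 1) * W.card ^ m := by
  classical
  have hsub : W.powerset.filter (fun T => T.card ≤ m) ⊆
      (Finset.range (m+1)).biUnion (fun j => Finset.powersetCard j W) := by
    intro T hT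
    simp only [mem_filter, mem_powerset] at hT
    simp only [mem_biUnion, Finset.mem_range, Finset.mem_powersetCard]
    exact ⟨T.card, by omega, hT.1, rfl⟩
  calc (W.powerset.filter (fun T => T.card ≤ m)).card
      ≤ ∑ j ∈ Finset.range (m+1), (Finset.powersetCard j W).card :=
        le_trans (Finset.card_le_card hsub) Finset.card_biUnion_le
    _ ≤ ∑ _j ∈ Finset.range (m+1), W.card ^ m := by
        apply Finset.sum_le_sum
        intro j hj
        rw [Finset.card_powersetCard]
        calc W.card.choose j ≤ W.card ^ j := Nat.choose_le_pow _ _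
          _ ≤ W.card ^ m := Nat.pow_le_pow_right hW (by simp only [Finset.mem_range] at hj; omega)
    _ = (m + 1) * W.card ^ m := by rw [Finset.sum_const, Finset.card_range, smul_eq_mul]


lemma numeric (L : ℝ) (n m r : ℕ) (hL : 20000 ≤ L)
    (hn : (n:ℝ) = Real.exp L)
    (hm1 : 1 ≤ m) (hm : (m:ℝ) ≤ L/4)
    (hr : (n:ℝ) < ((r:ℝ)+1) * ((m:ℝ)*(m:ℝ))) :
    ((m:ℝ)+1) * (4*(n:ℝ))^m * (1 - ((2:ℝ)^m)⁻¹)^r < 1/2 := by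
  have hL0 : (0:ℝ) < L := by linarith
  have hm0 : (0:ℝ) ≤ (m:ℝ) := Nat.cast_nonneg m
  have hm1' : (1:ℝ) ≤ (m:ℝ) := by exact_mod_cast hm1
  set x : ℝ := ((2:ℝ)^m)⁻¹ with hxdef
  have h2m : (0:ℝ) < (2:ℝ)^m := by positivity
  have hx0 : 0 < x := by positivity
  have hx1 : x ≤ 1 := by
    rw [hxdef, inv_le_one_iff₀]
    right
    exact one_le_pow₀ (by norm_num)
  -- key polynomial vs exponential bound
  have hkey : L^4 ≤ Real.exp (3/4*L) := by
    have h5 : Real.exp (3/4*L) = (Real.exp (3*L/20))^5 := by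
      rw [← Real.exp_nat_mul]
      norm_num
      ring_nf
    have h6 : (3*L/20) ≤ Real.exp (3*L/20) := by
      have := Real.add_one_le_exp (3*L/20); linarith
    have h7 : (3*L/20)^5 ≤ (Real.exp (3*L/20))^5 :=
      pow_le_pow_left₀ (by linarith) h6 5
    have h8 : L^4 ≤ (3*L/20)^5 := by nlinarith [sq_nonneg L, pow_pos hL0 4]
    rw [h5]; linarith
  -- (1-x)^r ≤ exp(-(x*r))
  have hstep1 : (1 - x)^r ≤ Real.exp (-(x*(r:ℝ))) := by
    have h1 : 1 - x ≤ Real.exp (-x) := by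
      have := Real.add_one_le_exp (-x); linarith
    calc (1 - x)^r ≤ (Real.exp (-x))^r := pow_le_pow_left₀ (by linarith) h1 r
      _ = Real.exp ((r:ℝ) * (-x)) := (Real.exp_nat_mul _ r).symm
      _ = Real.exp (-(x*(r:ℝ))) := by ring_nf
  -- (m+1) ≤ exp L
  have hstep2 : (m:ℝ)+1 ≤ Real.exp L := by
    have h1 : L + 1 ≤ Real.exp L := Real.add_one_le_exp L
    have : (m:ℝ) + 1 ≤ L := by linarith
    linarith
  -- (4n)^m ≤ exp (L²/2)
  have hlog4 : Real.log (4*(n:ℝ)) ≤ 2*L := by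
    have hn0 : (0:ℝ) < (n:ℝ) := by rw [hn]; exact Real.exp_pos L
    rw [Real.log_mul (by norm_num) (ne_of_gt hn0), hn, Real.log_exp]
    have : Real.log 4 ≤ 4 - 1 := Real.log_le_sub_one_of_pos (by norm_num)
    linarith
  have hn0 : (0:ℝ) < (n:ℝ) := by rw [hn]; exact Real.exp_pos L
  have hstep3 : (4*(n:ℝ))^m ≤ Real.exp (L^2/2) := by
    have h4n : (4*(n:ℝ)) = Real.exp (Real.log (4*(n:ℝ))) :=
      (Real.exp_log (by positivity)).symm
    have hlog0 : 0 ≤ Real.log (4*(n:ℝ)) := by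
      rw [Real.log_mul (by norm_num) (ne_of_gt hn0), hn, Real.log_exp]
      have : (0:ℝ) ≤ Real.log 4 := Real.log_nonneg (by norm_num)
      linarith
    calc (4*(n:ℝ))^m = Real.exp ((m:ℝ) * Real.log (4*(n:ℝ))) := by
          rw [Real.exp_nat_mul, ← h4n]
      _ ≤ Real.exp (L^2/2) := by
          apply Real.exp_le_exp.mpr
          calc (m:ℝ) * Real.log (4*(n:ℝ)) ≤ (L/4) * (2*L) :=
                mul_le_mul hm hlog4 hlog0 (by linarith)
            _ = L^2/2 := by ring
  -- x ≥ exp(-L/4)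
  have hstep4 : Real.exp (-(L/4)) ≤ x := by
    have h2pow : (2:ℝ)^m = Real.exp ((m:ℝ) * Real.log 2) := by
      rw [Real.exp_nat_mul, Real.exp_log (by norm_num)]
    have hlog2 : Real.log 2 ≤ 1 := by
      have := Real.log_le_sub_one_of_pos (show (0:ℝ) < 2 by norm_num); linarith
    have h2le : (2:ℝ)^m ≤ Real.exp (L/4) := by
      rw [h2pow]
      apply Real.exp_le_exp.mpr
      calc (m:ℝ) * Real.log 2 ≤ (m:ℝ) * 1 :=
            mul_le_mul_of_nonneg_left hlog2 hm0
        _ = (m:ℝ) := mul_one _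
        _ ≤ L/4 := hm
    rw [hxdef, Real.exp_neg]
    exact inv_anti₀ h2m h2le
  -- r lower bound : 16 exp L / L² ≤ r + 1
  have hLsq : (0:ℝ) < L^2 := by positivity
  have hstep5 : 16 * Real.exp L / L^2 ≤ (r:ℝ) + 1 := by
    have hmm : (m:ℝ)*(m:ℝ) ≤ L^2/16 := by nlinarith
    have hr1 : (0:ℝ) < (r:ℝ)+1 := by positivity
    have h1 : Real.exp L ≤ ((r:ℝ)+1) * (L^2/16) := by
      calc Real.exp L = (n:ℝ) := hn.symm
        _ ≤ ((r:ℝ)+1) * ((m:ℝ)*(m:ℝ)) := le_of_lt hr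
        _ ≤ ((r:ℝ)+1) * (L^2/16) := mul_le_mul_of_nonneg_left hmm (by positivity)
    rw [div_le_iff₀ hLsq]
    nlinarith
  -- x * r ≥ L + L²/2 + 1
  have hxr : L + L^2/2 + 1 ≤ x * (r:ℝ) := by
    have hexp34 : Real.exp (-(L/4)) * Real.exp L = Real.exp (3/4*L) := by
      rw [← Real.exp_add]; ring_nf
    have hB : 16 * Real.exp L / L^2 - 1 ≤ (r:ℝ) := by linarith
    have hB0 : (0:ℝ) ≤ 16 * Real.exp L / L^2 - 1 := by
      have h1 : L^4 ≤ Real.exp L := by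
        have : Real.exp (3/4*L) ≤ Real.exp L := Real.exp_le_exp.mpr (by linarith)
        linarith
      rw [le_sub_iff_add_le, zero_add, le_div_iff₀ hLsq]
      nlinarith
    have h2 : Real.exp (-(L/4)) * (16 * Real.exp L / L^2 - 1) ≤ x * (r:ℝ) := by
      apply mul_le_mul hstep4 hB hB0 (le_of_lt hx0)
    have h3 : Real.exp (-(L/4)) * (16 * Real.exp L / L^2 - 1)
        = 16 * Real.exp (3/4*L) / L^2 - Real.exp (-(L/4)) := by
      rw [mul_sub, mul_one, ← hexp34]
      ring
    have h4 : Real.exp (-(L/4)) ≤ 1 := by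
      rw [Real.exp_le_one_iff]; linarith
    have h5 : L + L^2/2 + 2 ≤ 16 * Real.exp (3/4*L) / L^2 := by
      rw [le_div_iff₀ hLsq]
      have hL1 : 1 ≤ L := by linarith
      have e1 : L^3 ≤ L^4 := by
        calc L^3 = L^3 * 1 := by ring
          _ ≤ L^3 * L := mul_le_mul_of_nonneg_left hL1 (pow_nonneg hL0.le 3)
          _ = L^4 := by ring
      have e0 : (1:ℝ) ≤ L^2 := by
        calc (1:ℝ) = 1*1 := by ring
          _ ≤ L*L := mul_le_mul hL1 hL1 (by norm_num) hL0.le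
          _ = L^2 := by ring
      have e2 : L^2 ≤ L^4 := by
        calc L^2 = L^2 * 1 := by ring
          _ ≤ L^2 * L^2 := mul_le_mul_of_nonneg_left e0 (pow_nonneg hL0.le 2)
          _ = L^4 := by ring
      have expand : (L + L^2/2 + 2) * L^2 = L^3 + L^4/2 + 2*L^2 := by ring
      rw [expand]
      have hE : (0:ℝ) ≤ Real.exp (3/4*L) := (Real.exp_pos _).le
      linarith [hkey, e1, e2]
    linarith
  -- final combination
  have hfac0 : (0:ℝ) ≤ ((m:ℝ)+1) := by linarith
  have hfac1 : (0:ℝ) ≤ (4*(n:ℝ))^m := by positivity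
  have hfac2 : (0:ℝ) ≤ (1-x)^r := pow_nonneg (by linarith) r
  calc ((m:ℝ)+1) * (4*(n:ℝ))^m * (1 - x)^r
      ≤ Real.exp L * Real.exp (L^2/2) * Real.exp (-(x*(r:ℝ))) := by
        apply mul_le_mul
        · exact mul_le_mul hstep2 hstep3 hfac1 (le_of_lt (Real.exp_pos _))
        · exact hstep1
        · exact hfac2
        · positivity
    _ = Real.exp (L + L^2/2 - x*(r:ℝ)) := by
        rw [← Real.exp_add, ← Real.exp_add]; ring_nf
    _ ≤ Real.exp (-1) := Real.exp_le_exp.mpr (by linarith)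
    _ < 1/2 := by
        have h2e : (2:ℝ) < Real.exp 1 := by
          have := Real.add_one_lt_exp (show (1:ℝ) ≠ 0 by norm_num)
          linarith
        rw [Real.exp_neg, one_div]
        exact inv_strictAnti₀ (by norm_num) h2e

/-- **Lower bound.** For all sufficiently large `n`, there is a set `C ⊆ {1, …, 2n}` of at
least `n` wheels such that every track `T ⊆ {1, …, 4n}` supporting `C` at all offsets
`k ∈ {0, …, 2n}` has more than `(ln n)/4` pillars. -/
theorem train_track_lower_bound : ∃ n₀ : ℕ, ∀ n : ℕ, n₀ ≤ n →
    ∃ C ⊆ Finset.Icc (1 : ℤ) (2 * n : ℕ), n ≤ C.card ∧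
      ∀ T ⊆ Finset.Icc (1 : ℤ) (4 * n : ℕ),
        (∀ k ∈ Finset.Icc (0 : ℤ) (2 * n : ℕ),
          ((C.image (fun c => c + k)) ∩ T).Nonempty) →
        Real.log n / 4 < (T.card : ℝ) := by
  classical
  refine ⟨⌈Real.exp 20000⌉₊ + 1, ?_⟩
  intro n hn
  have hn1 : 1 ≤ n := by omega
  have hnR : Real.exp 20000 ≤ (n:ℝ) := by
    have h1 : (⌈Real.exp 20000⌉₊ : ℝ) ≤ (n:ℝ) := by
      exact_mod_cast Nat.le_of_succ_le hn
    exact le_trans (Nat.le_ceil _) h1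
  have hn0R : (0:ℝ) < (n:ℝ) := by exact_mod_cast hn1
  set L := Real.log (n:ℝ) with hLdef
  have hL : 20000 ≤ L := by
    rw [hLdef, Real.le_log_iff_exp_le hn0R]
    exact hnR
  have hnexp : (n:ℝ) = Real.exp L := (Real.exp_log hn0R).symm
  set m := ⌊L/4⌋₊ with hmdef
  have hm1 : 1 ≤ m := Nat.le_floor (by push_cast; linarith)
  have hmle : (m:ℝ) ≤ L/4 := Nat.floor_le (by linarith)
  set x : ℝ := ((2:ℝ)^m)⁻¹ with hxdef
  have hx0 : 0 < x := by positivity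
  have hx1 : x ≤ 1 := by
    rw [hxdef, inv_le_one_iff₀]; right; exact one_le_pow₀ (by norm_num)
  set r := n / (m*m) with hrdef
  have hmm0 : 0 < m*m := Nat.mul_pos hm1 hm1
  set S := Finset.Icc (1:ℤ) ((2*n : ℕ) : ℤ) with hSdef
  set W := Finset.Icc (1:ℤ) ((4*n : ℕ) : ℤ) with hWdef
  set K0 := Finset.Icc (0:ℤ) ((2*n : ℕ) : ℤ) with hK0def
  have hScard : S.card = 2*n := by rw [hSdef, Int.card_Icc]; omega
  have hWcard : W.card = 4*n := by rw [hWdef, Int.card_Icc]; omega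
  have hK0card : K0.card = 2*n+1 := by rw [hK0def, Int.card_Icc]; omega
  set Bad : Finset ℤ → Finset (Finset ℤ) := fun T =>
    S.powerset.filter (fun C => ∀ k ∈ K0, ((C.image (fun c => c + k)) ∩ T).Nonempty) with hBaddef
  set 𝒯 := W.powerset.filter (fun T => T.card ≤ m) with h𝒯def
  -- per-T bound
  have hTbound : ∀ T ∈ 𝒯, ((Bad T).card : ℝ) ≤ 2^(2*n) * (1 - x)^r := by
    intro T hT
    have hRHS0 : (0:ℝ) ≤ 2^(2*n) * (1 - x)^r :=
      mul_nonneg (by positivity) (pow_nonneg (by linarith) r)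
    simp only [h𝒯def, mem_filter, mem_powerset] at hT
    obtain ⟨hTW, hTm⟩ := hT
    rcases T.eq_empty_or_nonempty with rfl | hTne
    · have hBadempty : Bad (∅ : Finset ℤ) = ∅ := by
        rw [hBaddef]
        apply Finset.filter_eq_empty_iff.mpr
        intro C _
        simp only [not_forall]
        refine ⟨0, ?_, by simp⟩
        rw [hK0def, Finset.mem_Icc]
        exact ⟨le_refl 0, Int.natCast_nonneg _⟩
      rw [hBadempty]
      simpa using hRHS0
    -- difference set
    set D := Finset.image₂ (fun a b => a - b) T T with hDdef
    have hD0 : (0:ℤ) ∈ D := by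
      obtain ⟨t, ht⟩ := hTne
      exact Finset.mem_image₂.mpr ⟨t, ht, t, ht, sub_self t⟩
    have hDsymm : ∀ d ∈ D, -d ∈ D := by
      intro d hd
      obtain ⟨a, ha, b, hb, hab⟩ := Finset.mem_image₂.mp hd
      exact Finset.mem_image₂.mpr ⟨b, hb, a, ha, by rw [← hab]; ring⟩
    have hDcard : D.card ≤ m*m :=
      le_trans (Finset.card_image₂_le _ _ _) (Nat.mul_le_mul hTm hTm)
    obtain ⟨K, hKsub, hKind, hKcard⟩ := exists_indep K0 D hD0 hDsymm
    have hrK : r ≤ K.card := by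
      have h1 : n ≤ K.card * (m*m) := by
        have h2 : 2*n+1 ≤ K.card * D.card := by rw [← hK0card]; exact hKcard
        have h3 : K.card * D.card ≤ K.card * (m*m) := Nat.mul_le_mul_left _ hDcard
        omega
      calc r = n / (m*m) := hrdef
        _ ≤ (K.card * (m*m)) / (m*m) := Nat.div_le_div_right h1
        _ = K.card := Nat.mul_div_cancel _ hmm0
    set A : ℤ → Finset ℤ := fun k => (T.image (fun t => t - k)) ∩ S with hAdef
    have hAsub : ∀ k ∈ K, A k ⊆ S := fun k _ => inter_subset_right
    have hAdisj : ∀ k ∈ K, ∀ k' ∈ K, k ≠ k' → Disjoint (A k) (A k') := by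
      intro k hk k' hk' hne
      rw [Finset.disjoint_left]
      intro c hc hc'
      obtain ⟨hc1, _⟩ := Finset.mem_inter.mp hc
      obtain ⟨hc1', _⟩ := Finset.mem_inter.mp hc'
      obtain ⟨t, ht, htc⟩ := Finset.mem_image.mp hc1
      obtain ⟨t', ht', htc'⟩ := Finset.mem_image.mp hc1'
      apply hKind k hk k' hk' hne
      have : k - k' = t - t' := by omega
      rw [this]
      exact Finset.mem_image₂.mpr ⟨t, ht, t', ht', rfl⟩
    have hAcard : ∀ k ∈ K, (A k).card ≤ m := by
      intro k _
      calc (A k).card ≤ (T.image (fun t => t - k)).card :=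
            Finset.card_le_card inter_subset_left
        _ ≤ T.card := Finset.card_image_le
        _ ≤ m := hTm
    have hBadsub : Bad T ⊆ S.powerset.filter (fun C => ∀ k ∈ K, (C ∩ A k).Nonempty) := by
      intro C hC
      simp only [hBaddef, mem_filter, mem_powerset] at hC
      obtain ⟨hCS, hCcov⟩ := hC
      simp only [mem_filter, mem_powerset]
      refine ⟨hCS, fun k hk => ?_⟩
      obtain ⟨t, ht⟩ := hCcov k (hKsub hk)
      obtain ⟨ht1, ht2⟩ := Finset.mem_inter.mp ht
      obtain ⟨c, hc, hct⟩ := Finset.mem_image.mp ht1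
      refine ⟨c, Finset.mem_inter.mpr ⟨hc, Finset.mem_inter.mpr ⟨?_, hCS hc⟩⟩⟩
      exact Finset.mem_image.mpr ⟨t, ht2, by omega⟩
    have hSigle : ∑ k ∈ K, (A k).card ≤ 2*n := by
      rw [← hScard, ← Finset.card_biUnion hAdisj]
      exact Finset.card_le_card (Finset.biUnion_subset.mpr hAsub)
    have hcount := count_lemma K S A hAsub hAdisj
    -- to reals
    have hcast : ((Bad T).card : ℝ) ≤
        (2:ℝ)^(S.card - ∑ k ∈ K, (A k).card) * ∏ k ∈ K, ((2:ℝ)^(A k).card - 1) := by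
      have h1 : (Bad T).card ≤ 2 ^ (S.card - ∑ k ∈ K, (A k).card) *
          ∏ k ∈ K, (2 ^ (A k).card - 1) := le_trans (Finset.card_le_card hBadsub) hcount
      have h2 := (Nat.cast_le (α := ℝ)).mpr h1
      refine le_trans h2 ?_
      push_cast [Nat.cast_prod, Nat.cast_sub (Nat.one_le_two_pow)]
      exact le_refl _
    have hprodpow : ∏ k ∈ K, (2:ℝ)^(A k).card = 2^(∑ k ∈ K, (A k).card) :=
      Finset.prod_pow_eq_pow_sum K _ _
    have hsplit : (2:ℝ)^(S.card - ∑ k ∈ K, (A k).card) * ∏ k ∈ K, ((2:ℝ)^(A k).card - 1)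
        = 2^(2*n) * ∏ k ∈ K, (((2:ℝ)^(A k).card - 1) / (2:ℝ)^(A k).card) := by
      rw [Finset.prod_div_distrib, hprodpow, hScard]
      have hsum := hSigle
      have hpowmul : (2:ℝ)^(2*n - ∑ k ∈ K, (A k).card) * 2^(∑ k ∈ K, (A k).card) = 2^(2*n) := by
        rw [← pow_add, Nat.sub_add_cancel hsum]
      field_simp
      rw [← hpowmul]
      ring
    have heq : ∀ k : ℤ, ((2:ℝ)^(A k).card - 1) / (2:ℝ)^(A k).card
        = 1 - ((2:ℝ)^(A k).card)⁻¹ := by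
      intro k
      have h2k : ((2:ℝ)^(A k).card) ≠ 0 := by positivity
      rw [sub_div, div_self h2k, one_div]
    have hfactor : ∏ k ∈ K, (((2:ℝ)^(A k).card - 1) / (2:ℝ)^(A k).card) ≤ (1 - x)^K.card := by
      rw [← Finset.prod_const]
      apply Finset.prod_le_prod
      · intro k _
        rw [heq k]
        have h1k : ((2:ℝ)^(A k).card)⁻¹ ≤ 1 := by
          rw [inv_le_one_iff₀]; right; exact one_le_pow₀ (by norm_num)
        linarith
      · intro k hk
        rw [heq k]
        have hle : (2:ℝ)^(A k).card ≤ 2^m := pow_le_pow_right₀ (by norm_num) (hAcard k hk)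
        have hxk : x ≤ ((2:ℝ)^(A k).card)⁻¹ := by
          rw [hxdef]
          exact inv_anti₀ (by positivity) hle
        linarith
    have hpowr : ((1:ℝ) - x)^K.card ≤ (1 - x)^r :=
      pow_le_pow_of_le_one (by linarith) (by linarith) hrK
    calc ((Bad T).card : ℝ)
        ≤ (2:ℝ)^(S.card - ∑ k ∈ K, (A k).card) * ∏ k ∈ K, ((2:ℝ)^(A k).card - 1) := hcast
      _ = 2^(2*n) * ∏ k ∈ K, (((2:ℝ)^(A k).card - 1) / (2:ℝ)^(A k).card) := hsplit
      _ ≤ 2^(2*n) * (1 - x)^K.card := mul_le_mul_of_nonneg_left hfactor (by positivity)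
      _ ≤ 2^(2*n) * (1 - x)^r := mul_le_mul_of_nonneg_left hpowr (by positivity)
  -- counting of small C
  have hsmall := small_count S
  set B1 := S.powerset.filter (fun C => 2*C.card < S.card) with hB1def
  have h𝒯card : 𝒯.card ≤ (m+1) * (4*n)^m := by
    have h := track_count W m (by rw [hWcard]; omega)
    rwa [hWcard] at h
  have hrreal : (n:ℝ) < ((r:ℝ)+1) * ((m:ℝ)*(m:ℝ)) := by
    have h1 : n < (n/(m*m) + 1) * (m*m) := by
      have h2 := Nat.div_add_mod n (m*m)
      have h3 := Nat.mod_lt n hmm0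
      calc n = (m*m) * (n/(m*m)) + n % (m*m) := (Nat.div_add_mod n (m*m)).symm
        _ < (m*m) * (n/(m*m)) + (m*m) := by omega
        _ = (n/(m*m) + 1) * (m*m) := by ring
    rw [hrdef]
    exact_mod_cast h1
  have hnum : ((m:ℝ)+1) * (4*(n:ℝ))^m * (1 - x)^r < 1/2 := by
    rw [hxdef]
    exact numeric L n m r hL hnexp hm1 hmle hrreal
  have hmain : ∃ C ∈ S.powerset, n ≤ C.card ∧ ∀ T ∈ 𝒯, C ∉ Bad T := by
    by_contra hcon
    push_neg at hcon
    have hcover : S.powerset ⊆ B1 ∪ 𝒯.biUnion Bad := by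
      intro C hC
      rcases lt_or_ge C.card n with h | h
      · apply Finset.mem_union_left
        rw [hB1def]
        exact Finset.mem_filter.mpr ⟨hC, by rw [hScard]; omega⟩
      · obtain ⟨T, hT, hCT⟩ := hcon C hC h
        exact Finset.mem_union_right _ (Finset.mem_biUnion.mpr ⟨T, hT, hCT⟩)
    have hcards : 2^(2*n) ≤ B1.card + ∑ T ∈ 𝒯, (Bad T).card := by
      calc 2^(2*n) = S.powerset.card := by rw [Finset.card_powerset, hScard]
        _ ≤ (B1 ∪ 𝒯.biUnion Bad).card := Finset.card_le_card hcover
        _ ≤ B1.card + (𝒯.biUnion Bad).card := Finset.card_union_le _ _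
        _ ≤ B1.card + ∑ T ∈ 𝒯, (Bad T).card :=
            Nat.add_le_add_left Finset.card_biUnion_le _
    have hB1R : (B1.card : ℝ) ≤ 2^(2*n) / 2 := by
      have h := hsmall
      rw [hScard] at h
      have h2 : ((2*B1.card : ℕ):ℝ) ≤ ((2^(2*n) : ℕ):ℝ) := by exact_mod_cast h
      push_cast at h2
      linarith
    have hsumR : (∑ T ∈ 𝒯, ((Bad T).card:ℝ)) ≤ (𝒯.card : ℝ) * (2^(2*n) * (1-x)^r) := by
      calc (∑ T ∈ 𝒯, ((Bad T).card:ℝ)) ≤ ∑ _T ∈ 𝒯, (2^(2*n) * (1-x)^r : ℝ) :=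
            Finset.sum_le_sum hTbound
        _ = 𝒯.card * (2^(2*n) * (1-x)^r) := by rw [Finset.sum_const, nsmul_eq_mul]
    have h𝒯R : (𝒯.card : ℝ) ≤ ((m:ℝ)+1) * (4*(n:ℝ))^m := by
      have h2 : ((𝒯.card:ℕ):ℝ) ≤ (((m+1)*(4*n)^m : ℕ):ℝ) := by exact_mod_cast h𝒯card
      push_cast at h2
      exact h2
    have h1x : (0:ℝ) ≤ (1-x)^r := pow_nonneg (by linarith) r
    have hpow0 : (0:ℝ) < 2^(2*n) := by positivity
    have hfinal : (∑ T ∈ 𝒯, ((Bad T).card:ℝ)) < 2^(2*n) / 2 := by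
      calc (∑ T ∈ 𝒯, ((Bad T).card:ℝ)) ≤ (𝒯.card : ℝ) * (2^(2*n) * (1-x)^r) := hsumR
        _ ≤ (((m:ℝ)+1) * (4*(n:ℝ))^m) * (2^(2*n) * (1-x)^r) :=
            mul_le_mul_of_nonneg_right h𝒯R (by positivity)
        _ = (((m:ℝ)+1) * (4*(n:ℝ))^m * (1-x)^r) * 2^(2*n) := by ring
        _ < (1/2) * 2^(2*n) := mul_lt_mul_of_pos_right hnum hpow0
        _ = 2^(2*n)/2 := by ring
    have hcastineq : ((2:ℝ))^(2*n) ≤ (B1.card : ℝ) + ∑ T ∈ 𝒯, ((Bad T).card:ℝ) := by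
      have h2 : ((2^(2*n) : ℕ):ℝ) ≤ ((B1.card + ∑ T ∈ 𝒯, (Bad T).card : ℕ):ℝ) := by
        exact_mod_cast hcards
      push_cast at h2
      exact h2
    linarith
  obtain ⟨C, hCP, hCcard, hCgood⟩ := hmain
  refine ⟨C, Finset.mem_powerset.mp hCP, hCcard, ?_⟩
  intro T hTsub hTsupp
  by_contra hle
  push_neg at hle
  have hTm : T.card ≤ m := by
    have h := Nat.le_floor (α := ℝ) (by push_cast; linarith [hle] : ((T.card:ℕ):ℝ) ≤ L/4)
    rwa [← hmdef] at h
  have hT𝒯 : T ∈ 𝒯 := by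
    rw [h𝒯def]
    exact Finset.mem_filter.mpr ⟨Finset.mem_powerset.mpr hTsub, hTm⟩
  have hCBad : C ∈ Bad T := by
    rw [hBaddef]
    exact Finset.mem_filter.mpr ⟨hCP, hTsupp⟩
  exact hCgood T hT𝒯 hCBad
end

section
/- There exists n₀ such that for every integer n ≥ n₀, the number of subsets C ⊆ {1, 2, …, 2n} for which there exists a track T ⊆ {1, 2, …, 4n} with |T| ≤ (ln n)/4 satisfying (C + k) ∩ T ≠ ∅ for all k ∈ {0, 1, …, 2n} is strictly less than 2^{2n−1}. -/
open Finset

section Aux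

/-- Greedy selection of a `D`-separated subset. -/
lemma greedy_sep (D : Finset ℤ) : ∀ A : Finset ℤ,
    ∃ K ⊆ A, (∀ a ∈ K, ∀ b ∈ K, a ≠ b → a - b ∉ D) ∧
      A.card ≤ K.card * (2 * D.card + 1) := by
  intro A
  induction A using Finset.strongInduction with
  | _ A ih =>
    rcases A.eq_empty_or_nonempty with rfl | ⟨a, ha⟩
    · exact ⟨∅, by simp⟩
    · set F1 : Finset ℤ := A.filter (fun b => a - b ∈ D) with hF1
      set F2 : Finset ℤ := A.filter (fun b => b - a ∈ D) with hF2
      set R : Finset ℤ := insert a (F1 ∪ F2) with hR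
      have hRsub : R ⊆ A := by
        intro x hx
        rcases mem_insert.1 hx with rfl | hx
        · exact ha
        · rcases mem_union.1 hx with hx | hx
          · exact (mem_filter.1 hx).1
          · exact (mem_filter.1 hx).1
      have hRcard : R.card ≤ 2 * D.card + 1 := by
        have h1 : F1.card ≤ D.card := by
          apply Finset.card_le_card_of_injOn (fun b => a - b)
          · intro b hb; exact (mem_filter.1 hb).2
          · intro x _ y _ h; simp only at h; omega
        have h2 : F2.card ≤ D.card := by
          apply Finset.card_le_card_of_injOn (fun b => b - a)
          · intro b hb; exact (mem_filter.1 hb).2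
          · intro x _ y _ h; simp only at h; omega
        have h3 : R.card ≤ (F1 ∪ F2).card + 1 := card_insert_le _ _
        have h4 : (F1 ∪ F2).card ≤ F1.card + F2.card := card_union_le _ _
        omega
      have haR : a ∈ R := mem_insert_self _ _
      have hss : A \ R ⊂ A := Finset.sdiff_ssubset hRsub ⟨a, haR⟩
      obtain ⟨K', hK'sub, hsep', hcard'⟩ := ih (A \ R) hss
      have haK' : a ∉ K' := fun h => (mem_sdiff.1 (hK'sub h)).2 haR
      have hnotR : ∀ c ∈ K', a - c ∉ D ∧ c - a ∉ D := by
        intro c hc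
        have hcA : c ∈ A := (mem_sdiff.1 (hK'sub hc)).1
        have hcR : c ∉ R := (mem_sdiff.1 (hK'sub hc)).2
        constructor
        · intro hd
          exact hcR (mem_insert_of_mem (mem_union_left _ (mem_filter.2 ⟨hcA, hd⟩)))
        · intro hd
          exact hcR (mem_insert_of_mem (mem_union_right _ (mem_filter.2 ⟨hcA, hd⟩)))
      refine ⟨insert a K', ?_, ?_, ?_⟩
      · intro x hx
        rcases mem_insert.1 hx with rfl | hx
        · exact ha
        · exact (mem_sdiff.1 (hK'sub hx)).1
      · intro x hx y hy hxy
        rcases mem_insert.1 hx with hx1 | hx1 <;> rcases mem_insert.1 hy with hy1 | hy1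
        · exact absurd (hx1.trans hy1.symm) hxy
        · subst hx1; exact (hnotR y hy1).1
        · subst hy1; exact (hnotR x hx1).2
        · exact hsep' x hx1 y hy1 hxy
      · have hAcover : A.card ≤ (A \ R).card + R.card := by
          have hsub : A ⊆ (A \ R) ∪ R := by
            intro x hx
            by_cases hxR : x ∈ R
            · exact mem_union_right _ hxR
            · exact mem_union_left _ (mem_sdiff.2 ⟨hx, hxR⟩)
          have := card_union_le (A \ R) R
          have := card_le_card hsub
          omega
        have hcardins : (insert a K').card = K'.card + 1 := card_insert_of_notMem haK'
        rw [hcardins]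
        have : (K'.card + 1) * (2 * D.card + 1) = K'.card * (2 * D.card + 1) + (2 * D.card + 1) := by ring
        omega

open scoped Classical in
/-- Counting subsets of `U` that hit every set of a pairwise disjoint family. -/
lemma hit_count (t : ℕ) : ∀ (L : List (Finset ℤ)) (U : Finset ℤ),
    (∀ S ∈ L, S ⊆ U ∧ S.card ≤ t) → List.Pairwise Disjoint L →
    (U.powerset.filter (fun C => ∀ S ∈ L, (C ∩ S).Nonempty)).card * ((2:ℕ)^t)^L.length
      ≤ (2^t - 1)^L.length * 2^U.card := by
  intro L
  induction L with
  | nil =>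
    intro U _ _
    simp only [List.length_nil, pow_zero, mul_one, one_mul, List.not_mem_nil]
    calc (U.powerset.filter _).card ≤ U.powerset.card := card_le_card (filter_subset _ _)
      _ = 2 ^ U.card := card_powerset U
  | cons S L' ihL =>
    intro U hsub hdisj
    have hSU : S ⊆ U := (hsub S (List.mem_cons_self)).1
    have hSt : S.card ≤ t := (hsub S (List.mem_cons_self)).2
    have hdisjS : ∀ S' ∈ L', Disjoint S S' := fun S' h => (List.pairwise_cons.1 hdisj).1 S' h
    have hdisj' : List.Pairwise Disjoint L' := (List.pairwise_cons.1 hdisj).2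
    set A : Finset (Finset ℤ) := S.powerset.filter (fun X => X.Nonempty) with hA
    set B : Finset (Finset ℤ) :=
      (U \ S).powerset.filter (fun C => ∀ S' ∈ L', (C ∩ S').Nonempty) with hB
    -- injection into A ×ˢ B
    have hinj : (U.powerset.filter (fun C => ∀ S'' ∈ S :: L', (C ∩ S'').Nonempty)).card
        ≤ A.card * B.card := by
      rw [← card_product]
      apply Finset.card_le_card_of_injOn (fun C => (C ∩ S, C \ S))
      · intro C hC
        rw [mem_coe, mem_filter, mem_powerset] at hC
        obtain ⟨hCU, hChit⟩ := hC
        rw [mem_coe, mem_product]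
        constructor
        · rw [hA, mem_filter, mem_powerset]
          exact ⟨inter_subset_right, hChit S (List.mem_cons_self)⟩
        · rw [hB, mem_filter, mem_powerset]
          refine ⟨fun x hx => mem_sdiff.2 ⟨hCU (mem_sdiff.1 hx).1, (mem_sdiff.1 hx).2⟩, ?_⟩
          intro S' hS'
          obtain ⟨x, hx⟩ := hChit S' (List.mem_cons_of_mem _ hS')
          rw [mem_inter] at hx
          have hxS : x ∉ S := fun h => Finset.disjoint_left.1 (hdisjS S' hS') h hx.2
          exact ⟨x, mem_inter.2 ⟨mem_sdiff.2 ⟨hx.1, hxS⟩, hx.2⟩⟩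
      · intro C1 h1 C2 h2 h
        simp only [Prod.mk.injEq] at h
        have e1 : C1 = (C1 \ S) ∪ (C1 ∩ S) := (Finset.sdiff_union_inter C1 S).symm
        have e2 : C2 = (C2 \ S) ∪ (C2 ∩ S) := (Finset.sdiff_union_inter C2 S).symm
        rw [e1, e2, h.1, h.2]
    have hAcard : A.card ≤ 2 ^ S.card - 1 := by
      have h1 : A ⊆ S.powerset.erase ∅ := by
        intro X hX
        rw [hA, mem_filter] at hX
        exact mem_erase.2 ⟨nonempty_iff_ne_empty.1 hX.2, hX.1⟩
      calc A.card ≤ (S.powerset.erase ∅).card := card_le_card h1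
        _ = S.powerset.card - 1 := card_erase_of_mem (mem_powerset.2 (empty_subset _))
        _ = 2 ^ S.card - 1 := by rw [card_powerset]
    have hBcard : B.card * ((2:ℕ)^t)^L'.length ≤ (2^t - 1)^L'.length * 2^(U \ S).card := by
      apply ihL
      · intro S' hS'
        refine ⟨?_, (hsub S' (List.mem_cons_of_mem _ hS')).2⟩
        intro x hx
        have hxU : x ∈ U := (hsub S' (List.mem_cons_of_mem _ hS')).1 hx
        have hxS : x ∉ S := fun h => Finset.disjoint_left.1 (hdisjS S' hS') h hx
        exact mem_sdiff.2 ⟨hxU, hxS⟩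
      · exact hdisj'
    -- arithmetic
    have hsle : S.card ≤ U.card := card_le_card hSU
    have hUS : (U \ S).card = U.card - S.card := card_sdiff_of_subset hSU
    have key : (2 ^ S.card - 1) * 2 ^ t * 2 ^ (U.card - S.card) ≤ (2^t - 1) * 2 ^ U.card := by
      have h1 : (2:ℕ) ^ S.card ≤ 2 ^ t := Nat.pow_le_pow_right (by norm_num) hSt
      have h2 : (1:ℕ) ≤ 2 ^ S.card := Nat.one_le_two_pow
      have h3 : (2 ^ S.card - 1) * 2 ^ t ≤ (2^t - 1) * 2 ^ S.card := by
        have e1 : (2 ^ S.card - 1) * 2 ^ t = 2 ^ S.card * 2 ^ t - 2 ^ t := by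
          rw [Nat.sub_mul, one_mul]
        have e2 : (2 ^ t - 1) * 2 ^ S.card = 2 ^ t * 2 ^ S.card - 2 ^ S.card := by
          rw [Nat.sub_mul, one_mul]
        rw [e1, e2, mul_comm]
        exact Nat.sub_le_sub_left h1 _
      calc (2 ^ S.card - 1) * 2 ^ t * 2 ^ (U.card - S.card)
          ≤ (2^t - 1) * 2 ^ S.card * 2 ^ (U.card - S.card) := Nat.mul_le_mul_right _ h3
        _ = (2^t - 1) * 2 ^ U.card := by
            rw [mul_assoc, ← pow_add, Nat.add_sub_cancel' hsle]
    calc (U.powerset.filter (fun C => ∀ S'' ∈ S :: L', (C ∩ S'').Nonempty)).card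
          * ((2:ℕ)^t)^(S :: L').length
        = ((U.powerset.filter (fun C => ∀ S'' ∈ S :: L', (C ∩ S'').Nonempty)).card * 2^t)
          * ((2:ℕ)^t)^L'.length := by rw [List.length_cons]; ring
      _ ≤ (A.card * B.card * 2^t) * ((2:ℕ)^t)^L'.length := by
          apply Nat.mul_le_mul_right
          exact Nat.mul_le_mul_right _ hinj
      _ = (A.card * 2^t) * (B.card * ((2:ℕ)^t)^L'.length) := by ring
      _ ≤ ((2 ^ S.card - 1) * 2^t) * ((2^t - 1)^L'.length * 2^(U \ S).card) := by
          exact Nat.mul_le_mul (Nat.mul_le_mul_right _ hAcard) hBcard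
      _ = ((2 ^ S.card - 1) * 2^t * 2^(U.card - S.card)) * (2^t - 1)^L'.length := by
          rw [hUS]; ring
      _ ≤ ((2^t - 1) * 2 ^ U.card) * (2^t - 1)^L'.length := Nat.mul_le_mul_right _ key
      _ = (2^t - 1)^(S :: L').length * 2^U.card := by rw [List.length_cons]; ring

lemma sum_choose_le' (N t : ℕ) : ∑ j ∈ Finset.range (t+1), N.choose j ≤ (N+1)^t := by
  induction t with
  | zero => simp
  | succ t ih =>
    rw [Finset.sum_range_succ]
    have h1 : N.choose (t+1) ≤ N ^ (t+1) := Nat.choose_le_pow N (t+1)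
    have h2 : (N+1)^t + N^(t+1) ≤ (N+1)^(t+1) := by
      have : (N+1)^(t+1) = (N+1)^t + N * (N+1)^t := by ring
      have h3 : N^(t+1) ≤ N * (N+1)^t := by
        rw [pow_succ, mul_comm]
        exact Nat.mul_le_mul_left N (Nat.pow_le_pow_left (Nat.le_succ N) t)
      omega
    omega

open scoped Classical in
lemma tracks_card_le (s : Finset ℤ) (t : ℕ) :
    (s.powerset.filter (fun T => T.card ≤ t)).card ≤ (s.card + 1)^t := by
  have hsub : s.powerset.filter (fun T => T.card ≤ t)
      ⊆ (Finset.range (t+1)).biUnion (fun j => s.powersetCard j) := by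
    intro T hT
    rw [mem_filter, mem_powerset] at hT
    exact mem_biUnion.2 ⟨T.card, Finset.mem_range.2 (by omega),
      (Finset.mem_powersetCard).2 ⟨hT.1, rfl⟩⟩
  calc (s.powerset.filter (fun T => T.card ≤ t)).card
      ≤ ((Finset.range (t+1)).biUnion (fun j => s.powersetCard j)).card := card_le_card hsub
    _ ≤ ∑ j ∈ Finset.range (t+1), (s.powersetCard j).card := card_biUnion_le
    _ = ∑ j ∈ Finset.range (t+1), s.card.choose j := by
        apply Finset.sum_congr rfl; intro j _; exact Finset.card_powersetCard j s
    _ ≤ (s.card + 1)^t := sum_choose_le' s.card t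

set_option maxHeartbeats 1000000 in
lemma kernel_ineq (n t m : ℕ) (hL0 : (2772:ℝ) ≤ Real.log n) (hn5 : (5:ℝ) ≤ (n:ℝ))
    (ht1 : 1 ≤ t)
    (ht : (t:ℝ) ≤ Real.log n / 4)
    (hm : 2*n + 1 ≤ m * (2*t^2 + 1)) :
    ((4*n+1 : ℕ):ℝ)^t * (1 - 1/2^t)^m ≤ 1/4 := by
  set L : ℝ := Real.log n with hLdef
  have hL : (2772:ℝ) ≤ L := hL0
  have hnpos : (0:ℝ) < n := by linarith
  have hexpL : (n:ℝ) = Real.exp L := (Real.exp_log hnpos).symm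
  have h2tpos : (0:ℝ) < 2^t := by positivity
  have hθ0 : (0:ℝ) ≤ 1 - 1/2^t := by
    have : (1:ℝ) ≤ 2^t := by exact_mod_cast Nat.one_le_two_pow (n:=t)
    rw [sub_nonneg]
    rw [div_le_one h2tpos]
    linarith
  -- log(4n+1) ≤ 2L
  have hlog4n : Real.log (4*(n:ℝ)+1) ≤ 2*L := by
    have h1 : 4*(n:ℝ)+1 ≤ (n:ℝ)^2 := by nlinarith
    calc Real.log (4*(n:ℝ)+1) ≤ Real.log ((n:ℝ)^2) := Real.log_le_log (by positivity) h1
      _ = 2*L := by rw [Real.log_pow]; push_cast; ring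
  have hlog4npos : (0:ℝ) ≤ Real.log (4*(n:ℝ)+1) := by
    apply Real.log_nonneg; nlinarith
  -- 2^t ≤ exp(L/4)
  have h2t : (2:ℝ)^t ≤ Real.exp (L/4) := by
    have e1 : (2:ℝ)^t = Real.exp (t * Real.log 2) := by
      rw [Real.exp_nat_mul, Real.exp_log (by norm_num : (0:ℝ) < 2)]
    rw [e1]
    apply Real.exp_le_exp.2
    have hlog2 : Real.log 2 ≤ 1 := by
      have := Real.log_le_sub_one_of_pos (by norm_num : (0:ℝ) < 2)
      linarith
    have ht0 : (0:ℝ) ≤ t := Nat.cast_nonneg t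
    calc (t:ℝ) * Real.log 2 ≤ (L/4) * 1 := by
          apply mul_le_mul ht hlog2 (Real.log_nonneg (by norm_num)) (by linarith)
      _ = L/4 := by ring
  -- bound on 2t²+1
  have ht2 : (2:ℝ)*(t:ℝ)^2 + 1 ≤ L^2/4 := by nlinarith [ht, hL]
  -- m lower bound : m ≥ 8 exp L / L²
  have hmR : 8 * Real.exp L / L^2 ≤ (m:ℝ) := by
    have h1 : 2*(n:ℝ) ≤ (m:ℝ) * (2*(t:ℝ)^2 + 1) := by
      have := hm
      have : (2*(n:ℝ) + 1) ≤ (m:ℝ) * (2*(t:ℝ)^2 + 1) := by exact_mod_cast hm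
      linarith
    have hm0 : (0:ℝ) ≤ m := Nat.cast_nonneg m
    have h2 : (m:ℝ) * (2*(t:ℝ)^2 + 1) ≤ (m:ℝ) * (L^2/4) := by
      apply mul_le_mul_of_nonneg_left ht2 hm0
    have h3 : 2*(n:ℝ) ≤ (m:ℝ) * (L^2/4) := le_trans h1 h2
    rw [hexpL] at h3
    rw [div_le_iff₀ (by nlinarith : (0:ℝ) < L^2)]
    nlinarith
  -- core: L^4 ≤ 8 exp(3L/4)
  have hcore : L^4 ≤ 8 * Real.exp (3*L/4) := by
    have e1 : Real.exp (3*L/4) = (Real.exp (3*L/20))^5 := by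
      rw [← Real.exp_nat_mul]; norm_num; ring_nf
    have e2 : (3*L/20 : ℝ) ≤ Real.exp (3*L/20) := by
      have := Real.add_one_le_exp (3*L/20); linarith
    have e3 : (3*L/20)^5 ≤ (Real.exp (3*L/20))^5 := by
      apply pow_le_pow_left₀ (by linarith) e2
    have hL4 : (0:ℝ) ≤ L^4 := by positivity
    have e4 : L^4 ≤ 8 * (3*L/20)^5 := by
      nlinarith [mul_nonneg (show (0:ℝ) ≤ 1944*L - 3200000 by linarith) hL4]
    calc L^4 ≤ 8 * (3*L/20)^5 := e4
      _ ≤ 8 * (Real.exp (3*L/20))^5 := by linarith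
      _ = 8 * Real.exp (3*L/4) := by rw [e1]
  -- main: t log(4n+1) + 2 ≤ m / 2^t
  have hmain : (t:ℝ) * Real.log (4*(n:ℝ)+1) + 2 ≤ (m:ℝ) / 2^t := by
    have h1 : (t:ℝ) * Real.log (4*(n:ℝ)+1) + 2 ≤ L^2 := by
      have : (t:ℝ) * Real.log (4*(n:ℝ)+1) ≤ (L/4) * (2*L) :=
        mul_le_mul ht hlog4n hlog4npos (by linarith)
      nlinarith
    have h2 : L^2 ≤ (m:ℝ) / Real.exp (L/4) := by
      rw [le_div_iff₀ (Real.exp_pos _)]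
      have hL2pos : (0:ℝ) < L^2 := by nlinarith
      have h3 : L^2 * Real.exp (L/4) * (L^2) ≤ 8 * Real.exp L := by
        have hstep := mul_le_mul_of_nonneg_right hcore (Real.exp_pos (L/4)).le
        calc L^2 * Real.exp (L/4) * (L^2) = L^4 * Real.exp (L/4) := by ring
          _ ≤ 8 * Real.exp (3*L/4) * Real.exp (L/4) := hstep
          _ = 8 * Real.exp (3*L/4 + L/4) := by rw [mul_assoc, Real.exp_add]
          _ = 8 * Real.exp L := by congr 1; ring
      have h4 : 8 * Real.exp L / L^2 ≤ (m:ℝ) := hmR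
      rw [div_le_iff₀ hL2pos] at h4
      have h5 : L^2 * Real.exp (L/4) * (L^2) ≤ (m:ℝ) * L^2 := le_trans h3 h4
      exact le_of_mul_le_mul_right h5 hL2pos
    have h5 : (m:ℝ) / Real.exp (L/4) ≤ (m:ℝ) / 2^t := by
      apply div_le_div_of_nonneg_left (Nat.cast_nonneg m) h2tpos h2t
    linarith
  -- conclude
  have hcast : ((4*n+1 : ℕ):ℝ) = 4*(n:ℝ)+1 := by push_cast; ring
  have hb1 : ((4*n+1 : ℕ):ℝ)^t = Real.exp ((t:ℝ) * Real.log (4*(n:ℝ)+1)) := by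
    rw [hcast, Real.exp_nat_mul, Real.exp_log (by nlinarith)]
  have hb2 : (1 - 1/2^t : ℝ)^m ≤ Real.exp (-((m:ℝ)/2^t)) := by
    have h1 : (1 - 1/2^t : ℝ) ≤ Real.exp (-(1/2^t)) := by
      have := Real.add_one_le_exp (-(1/(2:ℝ)^t)); linarith
    calc (1 - 1/2^t : ℝ)^m ≤ (Real.exp (-(1/2^t)))^m := pow_le_pow_left₀ hθ0 h1 m
      _ = Real.exp (-((m:ℝ)/2^t)) := by
          rw [← Real.exp_nat_mul]; congr 1; field_simp
  calc ((4*n+1 : ℕ):ℝ)^t * (1 - 1/2^t)^m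
      ≤ Real.exp ((t:ℝ) * Real.log (4*(n:ℝ)+1)) * Real.exp (-((m:ℝ)/2^t)) := by
        rw [hb1]
        apply mul_le_mul_of_nonneg_left hb2 (Real.exp_pos _).le
    _ = Real.exp ((t:ℝ) * Real.log (4*(n:ℝ)+1) - (m:ℝ)/2^t) := by
        rw [← Real.exp_add]; ring_nf
    _ ≤ Real.exp (-2) := Real.exp_le_exp.2 (by linarith)
    _ ≤ 1/4 := by
        rw [Real.exp_neg]
        rw [inv_le_comm₀ (Real.exp_pos _) (by norm_num)]
        have h1 : (2:ℝ) ≤ Real.exp 1 := by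
          have := Real.add_one_le_exp (1:ℝ); linarith
        have h2 : Real.exp 2 = (Real.exp 1)^2 := by
          rw [← Real.exp_nat_mul]; norm_num
        nlinarith [h1, h2]

end Aux

set_option maxHeartbeats 1000000 in
open scoped Classical in
/-- **Strengthened lower bound.** For all sufficiently large `n`, fewer than `2^(2n-1)` of the
subsets `C ⊆ {1, …, 2n}` admit a track `T ⊆ {1, …, 4n}` of at most `(ln n)/4` pillars
supporting `C` at every offset `k ∈ {0, …, 2n}`. -/
theorem train_track_lower_bound_most_cars : ∃ n₀ : ℕ, ∀ n : ℕ, n₀ ≤ n →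
    (((Finset.Icc (1 : ℤ) (2 * n : ℕ)).powerset.filter (fun C : Finset ℤ =>
        ∃ T ⊆ Finset.Icc (1 : ℤ) (4 * n : ℕ), (T.card : ℝ) ≤ Real.log n / 4 ∧
          ∀ k ∈ Finset.Icc (0 : ℤ) (2 * n : ℕ),
            ((C.image (fun c => c + k)) ∩ T).Nonempty)).card
      < 2 ^ (2 * n - 1)) := by
  refine ⟨2^4000, fun n hn => ?_⟩
  have hn1 : 1 ≤ n := le_trans Nat.one_le_two_pow hn
  have hnR5 : (5:ℝ) ≤ (n:ℝ) := by
    have h5 : (5:ℕ) ≤ 2^4000 := by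
      calc (5:ℕ) ≤ 2^3 := by norm_num
        _ ≤ 2^4000 := Nat.pow_le_pow_right (by norm_num) (by norm_num)
    exact_mod_cast le_trans h5 hn
  have hnpos : (0:ℝ) < (n:ℝ) := by linarith
  have hL0 : (2772:ℝ) ≤ Real.log n := by
    have h1 : ((2:ℕ)^4000 : ℝ) ≤ (n:ℝ) := by exact_mod_cast hn
    have h2 : ((2:ℕ)^4000 : ℝ) = (2:ℝ)^(4000:ℕ) := by push_cast; rfl
    have h3 : Real.log ((2:ℝ)^(4000:ℕ)) = (4000:ℕ) * Real.log 2 := Real.log_pow _ _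
    have h4 : (0.6931471803:ℝ) < Real.log 2 := Real.log_two_gt_d9
    have h5 : Real.log ((2:ℝ)^(4000:ℕ)) ≤ Real.log n :=
      Real.log_le_log (by positivity) (h2 ▸ h1)
    rw [h3] at h5
    push_cast at h5
    linarith
  set t : ℕ := ⌊Real.log n / 4⌋₊ with htdef
  have ht1 : 1 ≤ t := by
    apply Nat.le_floor
    push_cast
    linarith
  have htR : (t:ℝ) ≤ Real.log n / 4 := Nat.floor_le (by linarith)
  set U : Finset ℤ := Finset.Icc (1:ℤ) (2*n : ℕ) with hU
  set V : Finset ℤ := Finset.Icc (1:ℤ) (4*n : ℕ) with hV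
  set Off : Finset ℤ := Finset.Icc (0:ℤ) (2*n : ℕ) with hOff
  have hUcard : U.card = 2*n := by rw [hU, Int.card_Icc]; omega
  have hVcard : V.card = 4*n := by rw [hV, Int.card_Icc]; omega
  have hOffcard : Off.card = 2*n+1 := by rw [hOff, Int.card_Icc]; omega
  set Tracks : Finset (Finset ℤ) := V.powerset.filter (fun T => T.card ≤ t) with hTracks
  have hTrackscard : Tracks.card ≤ (4*n+1)^t := by
    have := tracks_card_le V t
    rw [hVcard] at this
    exact this
  set P : Finset ℤ → Finset ℤ → Prop :=
    fun T C => ∀ k ∈ Off, ((C.image (fun c => c + k)) ∩ T).Nonempty with hP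
  -- cover by tracks
  have hcover : (U.powerset.filter (fun C : Finset ℤ =>
      ∃ T ⊆ V, (T.card : ℝ) ≤ Real.log n / 4 ∧ P T C))
      ⊆ Tracks.biUnion (fun T => U.powerset.filter (fun C => P T C)) := by
    intro C hC
    rw [mem_filter] at hC
    obtain ⟨hCU, T, hTV, hTc, hPT⟩ := hC
    refine mem_biUnion.2 ⟨T, ?_, mem_filter.2 ⟨hCU, hPT⟩⟩
    rw [hTracks, mem_filter, mem_powerset]
    exact ⟨hTV, Nat.le_floor hTc⟩
  -- per-track bound
  have per_track : ∀ T ∈ Tracks,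
      ((U.powerset.filter (fun C => P T C)).card : ℝ)
        ≤ 2^(2*n) / (4 * ((4*n+1 : ℕ):ℝ)^t) := by
    intro T hT
    rw [hTracks, mem_filter, mem_powerset] at hT
    obtain ⟨hTV, hTc⟩ := hT
    set D : Finset ℤ := (T ×ˢ T).image (fun p => p.1 - p.2) with hD
    have hDcard : D.card ≤ t * t := by
      calc D.card ≤ (T ×ˢ T).card := card_image_le
        _ = T.card * T.card := card_product _ _
        _ ≤ t * t := Nat.mul_le_mul hTc hTc
    obtain ⟨K, hKOff, hsep, hKcard⟩ := greedy_sep D Off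
    set m : ℕ := K.card with hm
    have hmlow : 2*n + 1 ≤ m * (2*t^2 + 1) := by
      have h1 : 2 * D.card + 1 ≤ 2*t^2 + 1 := by
        have : t^2 = t*t := sq t
        omega
      calc 2*n+1 = Off.card := hOffcard.symm
        _ ≤ m * (2*D.card + 1) := hKcard
        _ ≤ m * (2*t^2 + 1) := Nat.mul_le_mul_left m h1
    set Sfun : ℤ → Finset ℤ := fun k => (T.image (fun p => p - k)) ∩ U with hSfun
    set Lst : List (Finset ℤ) := K.toList.map Sfun with hLst
    have hlen : Lst.length = m := by
      rw [hLst, List.length_map, Finset.length_toList]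
    have hsubL : ∀ S ∈ Lst, S ⊆ U ∧ S.card ≤ t := by
      intro S hS
      rw [hLst, List.mem_map] at hS
      obtain ⟨k, _, rfl⟩ := hS
      constructor
      · exact inter_subset_right
      · calc (Sfun k).card ≤ (T.image (fun p => p - k)).card :=
              card_le_card inter_subset_left
          _ ≤ T.card := card_image_le
          _ ≤ t := hTc
    have hdisjL : Lst.Pairwise Disjoint := by
      rw [hLst, List.pairwise_map]
      have hnd : K.toList.Pairwise (· ≠ ·) := K.nodup_toList
      refine List.Pairwise.imp_of_mem ?_ hnd
      intro a b ha hb hab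
      rw [Finset.disjoint_left]
      intro x hxa hxb
      rw [hSfun] at hxa hxb
      obtain ⟨p, hp, hpx⟩ := mem_image.1 (mem_inter.1 hxa).1
      obtain ⟨q, hq, hqx⟩ := mem_image.1 (mem_inter.1 hxb).1
      have haK : a ∈ K := Finset.mem_toList.1 ha
      have hbK : b ∈ K := Finset.mem_toList.1 hb
      have habD : a - b ∈ D := by
        rw [hD]
        refine mem_image.2 ⟨(p, q), mem_product.2 ⟨hp, hq⟩, ?_⟩
        simp only
        omega
      exact hsep a haK b hbK hab habD
    have hhits : U.powerset.filter (fun C => P T C)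
        ⊆ U.powerset.filter (fun C => ∀ S ∈ Lst, (C ∩ S).Nonempty) := by
      intro C hC
      rw [mem_filter] at hC ⊢
      refine ⟨hC.1, ?_⟩
      intro S hS
      rw [hLst, List.mem_map] at hS
      obtain ⟨k, hk, rfl⟩ := hS
      have hkOff : k ∈ Off := hKOff (Finset.mem_toList.1 hk)
      obtain ⟨x, hx⟩ := hC.2 k hkOff
      rw [mem_inter] at hx
      obtain ⟨c, hc, rfl⟩ := mem_image.1 hx.1
      refine ⟨c, mem_inter.2 ⟨hc, ?_⟩⟩
      rw [hSfun, mem_inter]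
      constructor
      · exact mem_image.2 ⟨c + k, hx.2, by ring⟩
      · exact mem_powerset.1 hC.1 hc
    have hnat : (U.powerset.filter (fun C => P T C)).card * ((2:ℕ)^t)^m
        ≤ (2^t - 1)^m * 2^(2*n) := by
      have h1 := hit_count t Lst U hsubL hdisjL
      rw [hlen, hUcard] at h1
      calc (U.powerset.filter (fun C => P T C)).card * ((2:ℕ)^t)^m
          ≤ (U.powerset.filter (fun C => ∀ S ∈ Lst, (C ∩ S).Nonempty)).card * ((2:ℕ)^t)^m :=
            Nat.mul_le_mul_right _ (card_le_card hhits)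
        _ ≤ (2^t - 1)^m * 2^(2*n) := h1
    -- to reals
    have h2t1 : (1:ℕ) ≤ 2^t := Nat.one_le_two_pow
    have hR : ((U.powerset.filter (fun C => P T C)).card : ℝ) * ((2:ℝ)^t)^m
        ≤ ((2:ℝ)^t - 1)^m * 2^(2*n) := by
      have := hnat
      have hcast : (((2^t - 1 : ℕ)) : ℝ) = (2:ℝ)^t - 1 := by
        push_cast [h2t1]
        ring
      exact_mod_cast this
    have h2tpos : (0:ℝ) < (2:ℝ)^t := by positivity
    have hθ0 : (0:ℝ) ≤ 1 - 1/(2:ℝ)^t := by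
      have h1 : (1:ℝ) ≤ 2^t := by exact_mod_cast h2t1
      rw [sub_nonneg, div_le_one h2tpos]
      linarith
    have hfact : ((2:ℝ)^t - 1)^m = (1 - 1/(2:ℝ)^t)^m * ((2:ℝ)^t)^m := by
      rw [← mul_pow]
      congr 1
      field_simp
    have hstep : ((U.powerset.filter (fun C => P T C)).card : ℝ)
        ≤ (1 - 1/(2:ℝ)^t)^m * 2^(2*n) := by
      have hXpos : (0:ℝ) < ((2:ℝ)^t)^m := by positivity
      apply le_of_mul_le_mul_right _ hXpos
      calc ((U.powerset.filter (fun C => P T C)).card : ℝ) * ((2:ℝ)^t)^m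
          ≤ ((2:ℝ)^t - 1)^m * 2^(2*n) := hR
        _ = (1 - 1/(2:ℝ)^t)^m * 2^(2*n) * ((2:ℝ)^t)^m := by rw [hfact]; ring
    have hker := kernel_ineq n t m hL0 hnR5 ht1 htR hmlow
    have hppos : (0:ℝ) < ((4*n+1 : ℕ):ℝ)^t := by positivity
    have hθm : (1 - 1/(2:ℝ)^t)^m ≤ 1 / (4 * ((4*n+1 : ℕ):ℝ)^t) := by
      rw [le_div_iff₀ (by positivity)]
      have h4k := mul_le_mul_of_nonneg_left hker (by norm_num : (0:ℝ) ≤ 4)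
      calc (1 - 1/(2:ℝ)^t)^m * (4 * ((4*n+1 : ℕ):ℝ)^t)
          = 4 * (((4*n+1 : ℕ):ℝ)^t * (1 - 1/(2:ℝ)^t)^m) := by ring
        _ ≤ 4 * (1/4) := h4k
        _ = 1 := by norm_num
    calc ((U.powerset.filter (fun C => P T C)).card : ℝ)
        ≤ (1 - 1/(2:ℝ)^t)^m * 2^(2*n) := hstep
      _ ≤ (1 / (4 * ((4*n+1 : ℕ):ℝ)^t)) * 2^(2*n) := by
          apply mul_le_mul_of_nonneg_right hθm (by positivity)
      _ = 2^(2*n) / (4 * ((4*n+1 : ℕ):ℝ)^t) := by ring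
  -- sum up
  set cnt : ℕ := (U.powerset.filter (fun C : Finset ℤ =>
      ∃ T ⊆ V, (T.card : ℝ) ≤ Real.log n / 4 ∧ P T C)).card with hcnt
  have hsum : (cnt : ℝ) ≤ 2^(2*n) / 4 := by
    have h1 : cnt ≤ ∑ T ∈ Tracks, (U.powerset.filter (fun C => P T C)).card := by
      calc cnt ≤ (Tracks.biUnion (fun T => U.powerset.filter (fun C => P T C))).card :=
            card_le_card hcover
        _ ≤ _ := card_biUnion_le
    have h2 : (cnt : ℝ) ≤ ∑ T ∈ Tracks, ((U.powerset.filter (fun C => P T C)).card : ℝ) := by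
      exact_mod_cast h1
    have h3 : ∑ T ∈ Tracks, ((U.powerset.filter (fun C => P T C)).card : ℝ)
        ≤ Tracks.card * (2^(2*n) / (4 * ((4*n+1 : ℕ):ℝ)^t)) := by
      calc ∑ T ∈ Tracks, ((U.powerset.filter (fun C => P T C)).card : ℝ)
          ≤ ∑ _T ∈ Tracks, (2^(2*n) / (4 * ((4*n+1 : ℕ):ℝ)^t)) :=
            Finset.sum_le_sum per_track
        _ = Tracks.card * (2^(2*n) / (4 * ((4*n+1 : ℕ):ℝ)^t)) := by
            rw [Finset.sum_const, nsmul_eq_mul]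
    have h4 : (Tracks.card : ℝ) ≤ ((4*n+1 : ℕ):ℝ)^t := by
      have : ((4*n+1)^t : ℕ) = (4*n+1 : ℕ)^t := rfl
      exact_mod_cast hTrackscard
    have hppos : (0:ℝ) < ((4*n+1 : ℕ):ℝ)^t := by positivity
    have h5 : (Tracks.card : ℝ) * (2^(2*n) / (4 * ((4*n+1 : ℕ):ℝ)^t))
        ≤ ((4*n+1 : ℕ):ℝ)^t * (2^(2*n) / (4 * ((4*n+1 : ℕ):ℝ)^t)) := by
      apply mul_le_mul_of_nonneg_right h4 (by positivity)
    have h6 : ((4*n+1 : ℕ):ℝ)^t * (2^(2*n) / (4 * ((4*n+1 : ℕ):ℝ)^t)) = 2^(2*n)/4 := by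
      field_simp
    calc (cnt:ℝ) ≤ _ := h2
      _ ≤ _ := h3
      _ ≤ _ := h5
      _ = _ := h6
  have hfin : (cnt : ℝ) < ((2:ℕ):ℝ)^(2*n-1) := by
    have he : (2:ℝ)^(2*n) = (2:ℝ)^(2*n-1) * 2 := by
      rw [← pow_succ]
      congr 1
      omega
    have hp : (0:ℝ) < (2:ℝ)^(2*n-1) := by positivity
    calc (cnt:ℝ) ≤ 2^(2*n)/4 := hsum
      _ = (2:ℝ)^(2*n-1) * 2 / 4 := by rw [he]
      _ < (2:ℝ)^(2*n-1) := by linarith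
      _ = ((2:ℕ):ℝ)^(2*n-1) := by norm_num
  have : (cnt : ℝ) < (((2:ℕ)^(2*n-1) : ℕ) : ℝ) := by
    rw [Nat.cast_pow]
    exact hfin
  exact_mod_cast this
end

section
/- Let n ≥ 2 and d ≥ 1 be integers, set f = n·d, and let ℓ ≥ f be an integer. Let C = {d, 2d, …, nd} ⊆ {1, …, f} be n evenly spaced wheel positions. Then there exists a track T ⊆ {1, 2, …, ℓ} such that for every offset k ∈ {0, 1, …, ℓ − f} we have (C + k) ∩ T ≠ ∅, and such that |T| ≤ ℓ/(n − 1) + d. -/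
set_option maxHeartbeats 1000000


/-- **Evenly spaced wheels.** If the `n` wheels are `C = {d, 2d, …, nd}` and `ℓ ≥ f = n·d`,
there is a track `T ⊆ {1, …, ℓ}` supporting `C` at every offset `k ∈ {0, …, ℓ - f}` with
`|T| ≤ ℓ/(n-1) + d`. -/
theorem train_track_evenly_spaced (n d ℓ : ℕ) (hn : 2 ≤ n) (hd : 1 ≤ d)
    (hℓ : n * d ≤ ℓ) :
    ∃ T ⊆ Finset.Icc (1 : ℤ) (ℓ : ℤ),
      (∀ k ∈ Finset.Icc (0 : ℤ) ((ℓ : ℤ) - (n * d : ℕ)),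
        ((((Finset.Icc (1 : ℕ) n).image (fun i : ℕ => (i : ℤ) * (d : ℤ))).image
            (fun c => c + k)) ∩ T).Nonempty) ∧
      (T.card : ℝ) ≤ (ℓ : ℝ) / ((n : ℝ) - 1) + (d : ℝ) := by
  set m : ℤ := ((n : ℤ) - 1) * d with hm_def
  have hdZ : (1 : ℤ) ≤ d := by exact_mod_cast hd
  have hnZ : (2 : ℤ) ≤ n := by exact_mod_cast hn
  have hm : 0 < m := by nlinarith
  have hdm : (d : ℤ) ≤ m := by nlinarith
  refine ⟨(Finset.Icc (1 : ℤ) ℓ).filter (fun x => x % m < d), Finset.filter_subset _ _,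
    ?_, ?_⟩
  · intro k hk
    rw [Finset.mem_Icc] at hk
    obtain ⟨hk0, hk1⟩ := hk
    have hk1' : k ≤ (ℓ : ℤ) - n * d := by push_cast at hk1 ⊢; linarith
    set r : ℤ := k % m with hr_def
    have hr0 : 0 ≤ r := Int.emod_nonneg _ hm.ne'
    have hrm : r < m := Int.emod_lt_of_pos _ hm
    set q : ℤ := r / d with hq_def
    set s : ℤ := r % d with hs_def
    have hs0 : 0 ≤ s := Int.emod_nonneg _ (by omega)
    have hsd : s < d := Int.emod_lt_of_pos _ (by omega)
    have hrqs : (d : ℤ) * q + s = r := Int.mul_ediv_add_emod r d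
    have hq0 : 0 ≤ q := Int.ediv_nonneg hr0 (by omega)
    have hqn : q ≤ (n : ℤ) - 2 := by nlinarith
    have hqt : (q.toNat : ℤ) = q := Int.toNat_of_nonneg hq0
    set i₀ : ℕ := n - 1 - q.toNat with hi_def
    have hi₀ : (i₀ : ℤ) = (n : ℤ) - 1 - q := by
      have h1 : q.toNat + 2 ≤ n := by omega
      push_cast [hi_def]
      omega
    set w : ℤ := (i₀ : ℤ) * d + k with hw_def
    refine ⟨w, Finset.mem_inter.2 ⟨?_, ?_⟩⟩
    · refine Finset.mem_image.2 ⟨(i₀ : ℤ) * d, Finset.mem_image.2 ⟨i₀, ?_, rfl⟩, rfl⟩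
      rw [Finset.mem_Icc]
      omega
    · rw [Finset.mem_filter, Finset.mem_Icc]
      have hkm : m * (k / m) + r = k := Int.mul_ediv_add_emod k m
      have hw_eq : w = s + m * (k / m + 1) := by
        rw [hw_def, hi₀]
        nlinarith [hkm, hrqs]
      have hwmod : w % m = s := by
        rw [hw_eq, Int.add_mul_emod_self_left, Int.emod_eq_of_lt hs0 (by omega)]
      refine ⟨⟨?_, ?_⟩, by omega⟩
      · nlinarith [hi₀, hqn, hk0, hdZ]
      · have : (i₀ : ℤ) ≤ n := by omega
        nlinarith
  · -- cardinality bound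
    set T := (Finset.Icc (1 : ℤ) ℓ).filter (fun x => x % m < d) with hT
    have hcard : T.card ≤ (Finset.Icc (0 : ℤ) (ℓ / m) ×ˢ Finset.Ico (0 : ℤ) d).card := by
      apply Finset.card_le_card_of_injOn (fun x => (x / m, x % m))
      · intro x hx
        rw [Finset.mem_coe, Finset.mem_filter, Finset.mem_Icc] at hx
        obtain ⟨⟨hx1, hx2⟩, hx3⟩ := hx
        rw [Finset.mem_coe, Finset.mem_product, Finset.mem_Icc, Finset.mem_Ico]
        refine ⟨⟨Int.ediv_nonneg (by omega) hm.le, Int.ediv_le_ediv hm hx2⟩,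
          Int.emod_nonneg _ hm.ne', hx3⟩
      · intro x _ y _ hxy
        have h1 : m * (x / m) + x % m = x := Int.mul_ediv_add_emod x m
        have h2 : m * (y / m) + y % m = y := Int.mul_ediv_add_emod y m
        have hx1 : x / m = y / m := congrArg Prod.fst hxy
        have hx2 : x % m = y % m := congrArg Prod.snd hxy
        rw [← h1, ← h2, hx1, hx2]
    have hq0 : 0 ≤ ℓ / m := Int.ediv_nonneg (by positivity) hm.le
    have hcard2 : (T.card : ℝ) ≤ (((ℓ : ℤ) / m : ℤ) + 1 : ℝ) * d := by
      rw [Finset.card_product, Int.card_Icc, Int.card_Ico] at hcard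
      have h := (Nat.cast_le (α := ℝ)).2 hcard
      calc (T.card : ℝ) ≤ _ := h
        _ = (((ℓ : ℤ) / m : ℤ) + 1 : ℝ) * d := by
          have h1 : ((ℓ:ℤ)/m + 1 - 0).toNat = ((ℓ:ℤ)/m).toNat + 1 := by omega
          have h2 : ((d:ℤ) - 0).toNat = d := by omega
          have h3 : ((((ℓ:ℤ)/m).toNat : ℕ) : ℝ) = (((ℓ:ℤ)/m : ℤ) : ℝ) := by
            exact_mod_cast congrArg (fun z : ℤ => (z : ℝ)) (Int.toNat_of_nonneg hq0)
          rw [Nat.cast_mul, h1, h2]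
          push_cast [h3]
          ring
    have hml : ((ℓ : ℤ) / m) * m ≤ ℓ := by
      have := Int.mul_ediv_add_emod (ℓ : ℤ) m
      have := Int.emod_nonneg (ℓ : ℤ) hm.ne'
      nlinarith
    have hmlR : (((ℓ : ℤ) / m : ℤ) : ℝ) * (((n : ℝ) - 1) * d) ≤ (ℓ : ℝ) := by
      have : ((((ℓ : ℤ) / m) * m : ℤ) : ℝ) ≤ ((ℓ : ℤ) : ℝ) := by exact_mod_cast hml
      push_cast [hm_def] at this
      linarith
    have hn1 : (0 : ℝ) < (n : ℝ) - 1 := by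
      have : (2 : ℝ) ≤ n := by exact_mod_cast hn
      linarith
    have hdR : (1 : ℝ) ≤ d := by exact_mod_cast hd
    refine hcard2.trans ?_
    have key : ((((ℓ : ℤ) / m : ℤ)) : ℝ) * d ≤ (ℓ : ℝ) / ((n : ℝ) - 1) := by
      rw [le_div_iff₀ hn1]
      nlinarith [hmlR]
    linarith
end

section
/- Let n ≥ 1 be an integer and let T ⊆ ℤ be any finite set. Then the sum, over all subsets C ⊆ {1, 2, …, 2n}, of the number of offsets k ∈ {0, 1, …, 2n} with (C + k) ∩ T = ∅, is at least (2n + 1)·2^{2n}/2^{|T|}. -/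
/-- **Expectation bound (counting form).** For any finite `T ⊆ ℤ`, the total number, over all
subsets `C ⊆ {1, …, 2n}`, of offsets `k ∈ {0, …, 2n}` at which `C + k` misses `T`, is at
least `(2n+1)·2^(2n)/2^|T|`. -/
theorem expected_unsupported_offsets (n : ℕ) (hn : 1 ≤ n) (T : Finset ℤ) :
    ((2 * n + 1 : ℝ) * 2 ^ (2 * n) / 2 ^ T.card : ℝ) ≤
      ∑ C ∈ (Finset.Icc (1 : ℤ) (2 * n : ℕ)).powerset,
        (((Finset.Icc (0 : ℤ) (2 * n : ℕ)).filter
            (fun k => (C.image (fun c => c + k)) ∩ T = ∅)).card : ℝ) := by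
  classical
  set I : Finset ℤ := Finset.Icc (1 : ℤ) (2 * n : ℕ) with hIdef
  have hIcard : I.card = 2 * n := by
    rw [hIdef, Int.card_Icc]; omega
  -- key pointwise bound for fixed k
  have key : ∀ k : ℤ, ((2:ℝ) ^ (2*n) / 2 ^ T.card) ≤
      ((I.powerset.filter
        (fun C => (C.image (fun c => c + k)) ∩ T = ∅)).card : ℝ) := by
    intro k
    set T' : Finset ℤ := T.image (fun t => t - k) with hT'def
    have hset : (I.powerset.filter (fun C => (C.image (fun c => c + k)) ∩ T = ∅))
        = (I \ T').powerset := by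
      ext C
      simp only [Finset.mem_filter, Finset.mem_powerset, Finset.subset_sdiff]
      constructor
      · rintro ⟨hCI, hdisj⟩
        refine ⟨hCI, ?_⟩
        rw [Finset.disjoint_right]
        intro a haT' haC
        obtain ⟨t, ht, rfl⟩ := Finset.mem_image.mp haT'
        have h1 : t - k + k ∈ C.image (fun c => c + k) := Finset.mem_image_of_mem _ haC
        rw [sub_add_cancel] at h1
        have h2 : t ∈ C.image (fun c => c + k) ∩ T := Finset.mem_inter.mpr ⟨h1, ht⟩
        rw [hdisj] at h2
        exact absurd h2 (Finset.notMem_empty t)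
      · rintro ⟨hCI, hdisj⟩
        refine ⟨hCI, ?_⟩
        ext x
        simp only [Finset.mem_inter, Finset.mem_image, Finset.notMem_empty, iff_false]
        rintro ⟨⟨c, hc, rfl⟩, hxT⟩
        have h1 : c + k - k ∈ T' := Finset.mem_image_of_mem _ hxT
        rw [add_sub_cancel_right] at h1
        exact (Finset.disjoint_right.mp hdisj h1) hc
    rw [hset, Finset.card_powerset]
    have hcard : 2 * n ≤ (I \ T').card + T.card := by
      have h1 : I.card ≤ (I \ T').card + T'.card := Finset.card_le_card_sdiff_add_card
      have h2 : T'.card ≤ T.card := Finset.card_image_le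
      omega
    rw [div_le_iff₀ (by positivity)]
    calc (2:ℝ) ^ (2*n) ≤ 2 ^ ((I \ T').card + T.card) := by
          apply pow_le_pow_right₀ (by norm_num) hcard
      _ = 2 ^ (I \ T').card * 2 ^ T.card := by rw [pow_add]
      _ = ((2 ^ (I \ T').card : ℕ) : ℝ) * 2 ^ T.card := by push_cast; ring
  -- swap the sums
  have hswap : ∑ C ∈ I.powerset,
        (((Finset.Icc (0 : ℤ) (2 * n : ℕ)).filter
            (fun k => (C.image (fun c => c + k)) ∩ T = ∅)).card : ℝ)
      = ∑ k ∈ Finset.Icc (0 : ℤ) (2 * n : ℕ),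
        ((I.powerset.filter
          (fun C => (C.image (fun c => c + k)) ∩ T = ∅)).card : ℝ) := by
    simp only [Finset.card_filter]
    push_cast
    rw [Finset.sum_comm]
  rw [hswap]
  have hKcard : (Finset.Icc (0 : ℤ) (2 * n : ℕ)).card = 2 * n + 1 := by
    rw [Int.card_Icc]; omega
  calc ((2 * n + 1 : ℝ) * 2 ^ (2 * n) / 2 ^ T.card : ℝ)
      = ∑ _k ∈ Finset.Icc (0 : ℤ) (2 * n : ℕ), ((2:ℝ) ^ (2*n) / 2 ^ T.card) := by
        rw [Finset.sum_const, hKcard]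
        push_cast [mul_div_assoc]
        ring
    _ ≤ _ := Finset.sum_le_sum fun k _ => key k
end

section
/- Let m ≥ 0 be an integer, let T ⊆ ℤ be a finite set, and let C, C′ ⊆ ℤ be two sets whose symmetric difference is a single element {i}. Define Y(C) to be the number of offsets k ∈ {0, 1, …, m} with (C + k) ∩ T = ∅, and similarly Y(C′). Then |Y(C) − Y(C′)| ≤ |T|. -/
/-- **Lipschitz condition.** If `C` and `C'` differ in a single element `i`, then the number
of offsets `k ∈ {0, …, m}` with `(C + k) ∩ T = ∅` changes by at most `|T|`. -/
theorem unsupported_offsets_lipschitz (m : ℕ) (T : Finset ℤ) (C C' : Finset ℤ) (i : ℤ)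
    (h : symmDiff C C' = {i}) :
    |(((Finset.Icc (0 : ℤ) (m : ℤ)).filter
          (fun k => (C.image (fun c => c + k)) ∩ T = ∅)).card : ℤ) -
      (((Finset.Icc (0 : ℤ) (m : ℤ)).filter
          (fun k => (C'.image (fun c => c + k)) ∩ T = ∅)).card : ℤ)| ≤ (T.card : ℤ) := by
  classical
  set S := Finset.Icc (0 : ℤ) (m : ℤ)
  set A := S.filter (fun k => (C.image (fun c => c + k)) ∩ T = ∅) with hA
  set B := S.filter (fun k => (C'.image (fun c => c + k)) ∩ T = ∅) with hB
  -- any element of A \ B or B \ A satisfies i + k ∈ T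
  have key : ∀ (D D' : Finset ℤ), symmDiff D D' = {i} →
      ∀ k, (D.image (fun c => c + k)) ∩ T = ∅ →
        ¬ ((D'.image (fun c => c + k)) ∩ T = ∅) → i + k ∈ T := by
    intro D D' hDD' k hD hD'
    rw [← Finset.not_nonempty_iff_eq_empty, not_not] at hD'
    obtain ⟨x, hx⟩ := hD'
    rw [Finset.mem_inter, Finset.mem_image] at hx
    obtain ⟨⟨c, hc, rfl⟩, hxT⟩ := hx
    have hcD : c ∉ D := by
      intro hcD
      have : c + k ∈ (D.image (fun c => c + k)) ∩ T := by
        rw [Finset.mem_inter, Finset.mem_image]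
        exact ⟨⟨c, hcD, rfl⟩, hxT⟩
      rw [hD] at this
      exact Finset.notMem_empty _ this
    have : c ∈ symmDiff D D' := by
      rw [Finset.mem_symmDiff]; exact Or.inr ⟨hc, hcD⟩
    rw [hDD'] at this
    rw [Finset.mem_singleton] at this
    subst this
    exact hxT
  have hsub : ∀ k ∈ symmDiff A B, k ∈ T.image (fun t => t - i) := by
    intro k hk
    rw [Finset.mem_symmDiff] at hk
    have hikT : i + k ∈ T := by
      rcases hk with ⟨hkA, hkB⟩ | ⟨hkB, hkA⟩
      · rw [hA, Finset.mem_filter] at hkA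
        have hkB' : ¬ ((C'.image (fun c => c + k)) ∩ T = ∅) := by
          intro hcon
          exact hkB (by rw [hB, Finset.mem_filter]; exact ⟨hkA.1, hcon⟩)
        exact key C C' h k hkA.2 hkB'
      · rw [hB, Finset.mem_filter] at hkB
        have hkA' : ¬ ((C.image (fun c => c + k)) ∩ T = ∅) := by
          intro hcon
          exact hkA (by rw [hA, Finset.mem_filter]; exact ⟨hkB.1, hcon⟩)
        exact key C' C (by rw [symmDiff_comm]; exact h) k hkB.2 hkA'
    exact Finset.mem_image.mpr ⟨i + k, hikT, by ring⟩
  have hcard : (symmDiff A B).card ≤ T.card := by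
    calc (symmDiff A B).card ≤ (T.image (fun t => t - i)).card :=
          Finset.card_le_card hsub
      _ ≤ T.card := Finset.card_image_le
  -- now the arithmetic
  have h1 : A.card = (A ∩ B).card + (A \ B).card := by
    rw [Finset.card_inter_add_card_sdiff]
  have h2 : B.card = (A ∩ B).card + (B \ A).card := by
    rw [Finset.inter_comm, Finset.card_inter_add_card_sdiff]
  have h3 : (symmDiff A B).card = (A \ B).card + (B \ A).card := by
    rw [symmDiff_def, Finset.sup_eq_union, Finset.card_union_of_disjoint]
    exact disjoint_sdiff_sdiff
  rw [abs_sub_le_iff]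
  constructor <;> [skip; skip] <;>
    · push_cast [h1, h2]
      omega
end

section
/- There exists n₀ such that for every integer n ≥ n₀ and every set T ⊆ {1, 2, …, 4n} with |T| ≤ (ln n)/4, the number of subsets C ⊆ {1, 2, …, 2n} satisfying (C + k) ∩ T ≠ ∅ for every k ∈ {0, 1, …, 2n} is at most 2·exp(−n^{1/4})·2^{2n}. -/
open Finset Filter Real Asymptotics


open Finset

-- Lemma: card of nonempty subsets of S
lemma card_powerset_nonempty (S : Finset ℤ) :
    (S.powerset.filter (fun A => A.Nonempty)).card = 2 ^ S.card - 1 := by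
  have h : S.powerset.filter (fun A => A.Nonempty) = S.powerset.erase ∅ := by
    ext A
    simp [Finset.nonempty_iff_ne_empty, and_comm]
  rw [h, Finset.card_erase_of_mem (Finset.empty_mem_powerset S), Finset.card_powerset]

-- Lemma: splitting the powerset count
lemma card_filter_split (U S : Finset ℤ) (hS : S ⊆ U) (p : Finset ℤ → Prop) [DecidablePred p]
    (hp : ∀ C : Finset ℤ, p C ↔ p (C \ S)) :
    (U.powerset.filter (fun C => (C ∩ S).Nonempty ∧ p C)).card
      = (S.powerset.filter (fun A => A.Nonempty)).card * (((U \ S).powerset.filter p)).card := by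
  rw [← Finset.card_product]
  apply Finset.card_bij' (fun C _ => (C ∩ S, C \ S)) (fun P _ => P.1 ∪ P.2)
  · rintro C hC
    simp only [Finset.mem_filter, Finset.mem_powerset] at hC ⊢
    obtain ⟨hCU, hne, hpC⟩ := hC
    refine Finset.mem_product.2 ⟨?_, ?_⟩ <;> simp only [Finset.mem_filter, Finset.mem_powerset]
    · exact ⟨Finset.inter_subset_right, hne⟩
    · exact ⟨Finset.sdiff_subset_sdiff hCU (le_refl S), (hp C).1 hpC⟩
  · rintro ⟨A, B⟩ hP
    rw [Finset.mem_product] at hP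
    simp only [Finset.mem_filter, Finset.mem_powerset] at hP ⊢
    obtain ⟨⟨hAS, hAne⟩, hBU, hpB⟩ := hP
    have hBS : Disjoint B S := Finset.disjoint_of_subset_left hBU (Finset.sdiff_disjoint)
    have hABS : (A ∪ B) \ S = B := by
      rw [Finset.union_sdiff_distrib, Finset.sdiff_eq_empty_iff_subset.2 hAS,
        Finset.empty_union, Finset.sdiff_eq_self_of_disjoint hBS]
    refine ⟨Finset.union_subset (hAS.trans hS) (hBU.trans (Finset.sdiff_subset)), ?_, ?_⟩
    · have : A ⊆ (A ∪ B) ∩ S := Finset.subset_inter Finset.subset_union_left hAS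
      exact hAne.mono this
    · rw [hp (A ∪ B), hABS]; exact hpB
  · intro C hC
    exact sup_inf_sdiff C S
  · rintro ⟨A, B⟩ hP
    rw [Finset.mem_product] at hP
    simp only [Finset.mem_filter, Finset.mem_powerset] at hP
    obtain ⟨⟨hAS, hAne⟩, hBU, hpB⟩ := hP
    have hBS : Disjoint B S := Finset.disjoint_of_subset_left hBU (Finset.sdiff_disjoint)
    have h1 : (A ∪ B) ∩ S = A := by
      rw [Finset.union_inter_distrib_right, Finset.inter_eq_left.2 hAS,
        (Finset.disjoint_iff_inter_eq_empty.1 hBS), Finset.union_empty]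
    have h2 : (A ∪ B) \ S = B := by
      rw [Finset.union_sdiff_distrib, Finset.sdiff_eq_empty_iff_subset.2 hAS,
        Finset.empty_union, Finset.sdiff_eq_self_of_disjoint hBS]
    simp [h1, h2]

lemma count_le (t : ℕ) : ∀ (L : List (Finset ℤ)) (U : Finset ℤ), (∀ S ∈ L, S ⊆ U) →
    (∀ S ∈ L, S.card ≤ t) → L.Pairwise Disjoint →
    ((U.powerset.filter (fun C => ∀ S ∈ L, (C ∩ S).Nonempty)).card : ℝ)
      ≤ (1 - (2:ℝ)⁻¹ ^ t) ^ L.length * 2 ^ U.card := by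
  intro L
  induction L with
  | nil =>
    intro U _ _ _
    simp only [List.not_mem_nil, false_implies, implies_true, Finset.filter_true_of_mem,
      List.length_nil, pow_zero, one_mul]
    rw [Finset.card_powerset]
    push_cast
    norm_num
  | cons S L' ih =>
    intro U hsub hcard hpair
    have hSU : S ⊆ U := hsub S (List.mem_cons_self)
    have hdisj : ∀ S' ∈ L', Disjoint S S' := (List.pairwise_cons.1 hpair).1
    have hfilter : U.powerset.filter (fun C => ∀ S' ∈ S :: L', (C ∩ S').Nonempty)
        = U.powerset.filter (fun C => (C ∩ S).Nonempty ∧ ∀ S' ∈ L', (C ∩ S').Nonempty) := by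
      apply Finset.filter_congr
      intro C _
      simp [List.forall_mem_cons]
    have hp : ∀ C : Finset ℤ, (∀ S' ∈ L', (C ∩ S').Nonempty) ↔
        (∀ S' ∈ L', ((C \ S) ∩ S').Nonempty) := by
      intro C
      have : ∀ S' ∈ L', C ∩ S' = (C \ S) ∩ S' := by
        intro S' hS'
        have hd := hdisj S' hS'
        ext x
        simp only [Finset.mem_inter, Finset.mem_sdiff]
        constructor
        · rintro ⟨hx, hx'⟩
          exact ⟨⟨hx, fun hxS => (Finset.disjoint_left.1 hd) hxS hx'⟩, hx'⟩
        · rintro ⟨⟨hx, _⟩, hx'⟩; exact ⟨hx, hx'⟩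
      constructor
      · intro h S' hS'; rw [← this S' hS']; exact h S' hS'
      · intro h S' hS'; rw [this S' hS']; exact h S' hS'
    rw [hfilter, card_filter_split U S hSU _ hp, card_powerset_nonempty]
    have hrest : ∀ S' ∈ L', S' ⊆ U \ S := by
      intro S' hS'
      exact Finset.subset_sdiff.2 ⟨hsub S' (List.mem_cons_of_mem _ hS'), (hdisj S' hS').symm⟩
    have hIH := ih (U \ S) hrest (fun S' hS' => hcard S' (List.mem_cons_of_mem _ hS'))
      (List.pairwise_cons.1 hpair).2
    have hSt : S.card ≤ t := hcard S (List.mem_cons_self)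
    have hsplit : (U \ S).card + S.card = U.card := Finset.card_sdiff_add_card_eq_card hSU
    have h2 : ((2:ℝ) ^ S.card - 1) ≤ (1 - (2:ℝ)⁻¹ ^ t) * 2 ^ S.card := by
      have h21 : (2:ℝ) ^ S.card ≤ 2 ^ t := by
        apply pow_le_pow_right₀ (by norm_num) hSt
      have h22 : (2:ℝ)⁻¹ ^ t * 2 ^ S.card ≤ 1 := by
        rw [inv_pow]
        rw [inv_mul_le_iff₀ (by positivity)]
        simpa using h21
      nlinarith
    have hnn : (0:ℝ) ≤ 1 - (2:ℝ)⁻¹ ^ t := by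
      have : (2:ℝ)⁻¹ ^ t ≤ 1 := by
        apply pow_le_one₀ <;> norm_num
      linarith
    have hcast : (((2 ^ S.card - 1) * ((U \ S).powerset.filter
        (fun C => ∀ S' ∈ L', (C ∩ S').Nonempty)).card : ℕ) : ℝ)
        = ((2:ℝ) ^ S.card - 1) * (((U \ S).powerset.filter
          (fun C => ∀ S' ∈ L', (C ∩ S').Nonempty)).card : ℝ) := by
      push_cast [Nat.one_le_two_pow]
      ring
    rw [hcast]
    calc ((2:ℝ) ^ S.card - 1) * _
        ≤ ((1 - (2:ℝ)⁻¹ ^ t) * 2 ^ S.card) * ((1 - (2:ℝ)⁻¹ ^ t) ^ L'.length * 2 ^ (U \ S).card) := by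
          apply mul_le_mul h2 hIH (Nat.cast_nonneg _)
          positivity
      _ = (1 - (2:ℝ)⁻¹ ^ t) ^ (S :: L').length * 2 ^ U.card := by
          rw [List.length_cons, ← hsplit, pow_add, pow_succ]
          ring



-- eventual facts
private lemma mcd_F1 : ∀ᶠ n : ℕ in atTop, (Real.log n)^2 ≤ (n:ℝ)^((1:ℝ)/20) := by
  have h := isLittleO_log_rpow_atTop (by norm_num : (0:ℝ) < 1/40)
  have hb := h.bound one_pos
  have hx : ∀ᶠ x : ℝ in atTop, Real.log x ≤ x ^ ((1:ℝ)/40) := by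
    filter_upwards [hb, eventually_ge_atTop (1:ℝ)] with x hx h1
    calc Real.log x ≤ ‖Real.log x‖ := le_abs_self _
      _ ≤ 1 * ‖x ^ ((1:ℝ)/40)‖ := hx
      _ = x ^ ((1:ℝ)/40) := by
          rw [one_mul, Real.norm_eq_abs, abs_of_nonneg (Real.rpow_nonneg (by linarith) _)]
  have hn := tendsto_natCast_atTop_atTop (R := ℝ) |>.eventually hx
  filter_upwards [hn, eventually_ge_atTop 1] with n h1 h2
  have h1n : (1:ℝ) ≤ n := by exact_mod_cast h2
  have hlog : 0 ≤ Real.log n := Real.log_nonneg h1n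
  calc (Real.log n)^2 ≤ ((n:ℝ) ^ ((1:ℝ)/40))^2 := by
        apply pow_le_pow_left₀ hlog h1
    _ = (n:ℝ)^((1:ℝ)/20) := by
        rw [← Real.rpow_natCast ((n:ℝ)^((1:ℝ)/40)) 2, ← Real.rpow_mul (by linarith)]
        norm_num

private lemma mcd_F2 : ∀ᶠ n : ℕ in atTop, 2*(n:ℝ)^((9:ℝ)/20) ≤ (n:ℝ) := by
  have h : Filter.Tendsto (fun x:ℝ => x^((11:ℝ)/20)) atTop atTop :=
    tendsto_rpow_atTop (by norm_num)
  have hx : ∀ᶠ x : ℝ in atTop, 2*x^((9:ℝ)/20) ≤ x := by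
    filter_upwards [h.eventually_ge_atTop 2, eventually_ge_atTop (1:ℝ)] with x h2 h1
    have h0 : (0:ℝ) ≤ x := by linarith
    calc 2*x^((9:ℝ)/20) ≤ x^((11:ℝ)/20) * x^((9:ℝ)/20) := by
          apply mul_le_mul_of_nonneg_right h2 (Real.rpow_nonneg h0 _)
      _ = x := by
          rw [← Real.rpow_add (by linarith)]
          norm_num
  have hn := tendsto_natCast_atTop_atTop (R := ℝ) |>.eventually hx
  filter_upwards [hn] with n h; exact h


set_option maxHeartbeats 1000000 in
/-- **McDiarmid concentration step (counting form).** For all sufficiently large `n` and any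
track `T ⊆ {1, …, 4n}` with `|T| ≤ (ln n)/4`, at most a `2·exp(-n^(1/4))` fraction of the
subsets `C ⊆ {1, …, 2n}` are supported by `T` at every offset `k ∈ {0, …, 2n}`. -/
theorem mcdiarmid_counting_step : ∃ n₀ : ℕ, ∀ n : ℕ, n₀ ≤ n →
    ∀ T ⊆ Finset.Icc (1 : ℤ) (4 * n : ℕ), (T.card : ℝ) ≤ Real.log n / 4 →
      ((((Finset.Icc (1 : ℤ) (2 * n : ℕ)).powerset.filter (fun C : Finset ℤ =>
          ∀ k ∈ Finset.Icc (0 : ℤ) (2 * n : ℕ),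
            ((C.image (fun c => c + k)) ∩ T).Nonempty)).card : ℝ)
        ≤ 2 * Real.exp (-(n : ℝ) ^ ((1 : ℝ) / 4)) * 2 ^ (2 * n)) := by
  obtain ⟨n₀, hn₀⟩ := eventually_atTop.1 (mcd_F1.and (mcd_F2.and (eventually_ge_atTop 1)))
  refine ⟨n₀, fun n hn T _ hT => ?_⟩
  obtain ⟨hF1, hF2, hn1⟩ := hn₀ n hn
  have hn1R : (1:ℝ) ≤ n := by exact_mod_cast hn1
  have hn0R : (0:ℝ) < n := by linarith
  set t := T.card with ht_def
  set U := Finset.Icc (1 : ℤ) ((2 * n : ℕ) : ℤ) with hU_def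
  have hrnn : (0:ℝ) ≤ (n:ℝ)^((9:ℝ)/20) := Real.rpow_nonneg (le_of_lt hn0R) _
  have hr1 : (1:ℝ) ≤ (n:ℝ)^((9:ℝ)/20) := Real.one_le_rpow hn1R (by norm_num)
  obtain ⟨m, hm1, hmlow, hmup⟩ : ∃ m : ℕ, 1 ≤ m ∧ (n:ℝ)^((9:ℝ)/20) ≤ (m:ℝ) ∧
      (m:ℝ) ≤ 2*(n:ℝ)^((9:ℝ)/20) := by
    refine ⟨⌈(n:ℝ)^((9:ℝ)/20)⌉₊, ?_, Nat.le_ceil _, ?_⟩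
    · exact Nat.one_le_iff_ne_zero.2 (by
        intro h
        have := Nat.ceil_eq_zero.1 h
        linarith)
    · have := Nat.ceil_lt_add_one hrnn
      linarith
  -- t bounds
  have ht0 : (0:ℝ) ≤ (t:ℝ) := Nat.cast_nonneg _
  have hlogn : 0 ≤ Real.log n := Real.log_nonneg hn1R
  -- size bound (real)
  have hsizeR : (m:ℝ) * ((t:ℝ)^2*(m:ℝ)+1) ≤ 2*(n:ℝ) := by
    have ht2 : (t:ℝ)^2 ≤ (Real.log n)^2 / 16 := by nlinarith
    have hm2 : (m:ℝ)^2 ≤ 4 * (n:ℝ)^((9:ℝ)/10) := by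
      have : ((n:ℝ)^((9:ℝ)/20))^2 = (n:ℝ)^((9:ℝ)/10) := by
        rw [← Real.rpow_natCast ((n:ℝ)^((9:ℝ)/20)) 2, ← Real.rpow_mul (le_of_lt hn0R)]
        norm_num
      nlinarith
    have hmul : (n:ℝ)^((1:ℝ)/20) * (n:ℝ)^((9:ℝ)/10) ≤ (n:ℝ) := by
      rw [← Real.rpow_add hn0R]
      norm_num
      calc (n:ℝ)^((19:ℝ)/20) ≤ (n:ℝ)^(1:ℝ) := by
            apply Real.rpow_le_rpow_of_exponent_le hn1R (by norm_num)
        _ = n := Real.rpow_one _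
    have h1 : (m:ℝ)^2 * (t:ℝ)^2 ≤ (n:ℝ)/4 := by nlinarith [Real.rpow_nonneg (le_of_lt hn0R) ((9:ℝ)/10), Real.rpow_nonneg (le_of_lt hn0R) ((1:ℝ)/20)]
    have h2 : (m:ℝ) ≤ (n:ℝ) := by linarith
    nlinarith
  -- integer size bound
  have hsizeZ : (m:ℤ) * ((t:ℤ)^2*(m:ℤ)+1) ≤ ((2*n : ℕ):ℤ) := by
    have : ((m:ℤ) * ((t:ℤ)^2*(m:ℤ)+1) : ℤ) = ((m * (t^2*m+1) : ℕ) : ℤ) := by push_cast; ring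
    rw [this]
    have : ((m * (t^2*m+1) : ℕ) : ℝ) ≤ ((2*n : ℕ):ℝ) := by push_cast; nlinarith
    exact_mod_cast this
  -- difference set and bad set
  set D := (T ×ˢ T).image (fun p : ℤ × ℤ => p.1 - p.2) with hD_def
  set B := (D ×ˢ Finset.Icc (1:ℤ) (m:ℤ)).image (fun p : ℤ × ℤ => p.1 / p.2) with hB_def
  set N := (t:ℤ)^2*(m:ℤ)+1 with hN_def
  have hDcard : D.card ≤ t^2 := by
    calc D.card ≤ (T ×ˢ T).card := Finset.card_image_le
      _ = t^2 := by rw [Finset.card_product]; ring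
  have hIccm : (Finset.Icc (1:ℤ) (m:ℤ)).card = m := by
    rw [Int.card_Icc]; simp
  have hIccN : (Finset.Icc (1:ℤ) N).card = t^2*m+1 := by
    rw [Int.card_Icc, hN_def]
    have : (t:ℤ)^2*(m:ℤ)+1+1-1 = ((t^2*m+1 : ℕ):ℤ) := by push_cast; ring
    rw [this, Int.toNat_natCast]
  have hBcard : B.card ≤ t^2*m := by
    calc B.card ≤ (D ×ˢ Finset.Icc (1:ℤ) (m:ℤ)).card := Finset.card_image_le
      _ = D.card * m := by rw [Finset.card_product, hIccm]
      _ ≤ t^2*m := Nat.mul_le_mul_right _ hDcard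
  obtain ⟨s, hsIcc, hsB⟩ : ∃ s ∈ Finset.Icc (1:ℤ) N, s ∉ B := by
    by_contra h
    push_neg at h
    have hsub : Finset.Icc (1:ℤ) N ⊆ B := fun x hx => h x hx
    have := Finset.card_le_card hsub
    omega
  rw [Finset.mem_Icc] at hsIcc
  obtain ⟨hs1, hsN⟩ := hsIcc
  -- the offset sets
  set Sf : ℕ → Finset ℤ := fun j => (T.image (fun y => y - (j:ℤ)*s)) ∩ U with hSf_def
  set L := (List.range m).map Sf with hL_def
  have hLsub : ∀ S ∈ L, S ⊆ U := by
    intro S hS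
    rw [hL_def, List.mem_map] at hS
    obtain ⟨j, _, rfl⟩ := hS
    exact Finset.inter_subset_right
  have hLcard : ∀ S ∈ L, S.card ≤ t := by
    intro S hS
    rw [hL_def, List.mem_map] at hS
    obtain ⟨j, _, rfl⟩ := hS
    calc (Sf j).card ≤ (T.image (fun y => y - (j:ℤ)*s)).card :=
          Finset.card_le_card Finset.inter_subset_left
      _ ≤ t := Finset.card_image_le
  -- pairwise disjoint
  have hLpair : L.Pairwise Disjoint := by
    rw [hL_def, List.pairwise_map]
    rw [List.pairwise_iff_getElem]
    intro i j hi hj hij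
    simp only [List.length_range] at hi hj
    simp only [List.getElem_range]
    rw [Finset.disjoint_left]
    intro x hxi hxj
    simp only [hSf_def, Finset.mem_inter, Finset.mem_image] at hxi hxj
    obtain ⟨⟨a, haT, ha⟩, _⟩ := hxi
    obtain ⟨⟨b, hbT, hb⟩, _⟩ := hxj
    have hd : b - a = ((j:ℤ) - (i:ℤ)) * s := by
      have : a - (i:ℤ)*s = b - (j:ℤ)*s := by rw [ha, hb]
      linarith
    have hji : (0:ℤ) < (j:ℤ) - (i:ℤ) := by omega
    have hjm : (j:ℤ) - (i:ℤ) ≤ (m:ℤ) := by omega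
    apply hsB
    rw [hB_def, Finset.mem_image]
    refine ⟨(b - a, (j:ℤ) - (i:ℤ)), ?_, ?_⟩
    · rw [Finset.mem_product]
      constructor
      · rw [hD_def, Finset.mem_image]
        exact ⟨(b, a), Finset.mem_product.2 ⟨hbT, haT⟩, rfl⟩
      · rw [Finset.mem_Icc]; omega
    · simp only
      rw [hd, Int.mul_ediv_cancel_left _ (ne_of_gt hji)]
  -- subset of filters
  have hsubfilter : (U.powerset.filter (fun C : Finset ℤ =>
          ∀ k ∈ Finset.Icc (0 : ℤ) ((2 * n : ℕ):ℤ),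
            ((C.image (fun c => c + k)) ∩ T).Nonempty))
      ⊆ (U.powerset.filter (fun C => ∀ S ∈ L, (C ∩ S).Nonempty)) := by
    intro C hC
    rw [Finset.mem_filter] at hC ⊢
    obtain ⟨hCU, hCk⟩ := hC
    refine ⟨hCU, ?_⟩
    intro S hS
    rw [hL_def, List.mem_map] at hS
    obtain ⟨j, hjm, rfl⟩ := hS
    rw [List.mem_range] at hjm
    have hk : (j:ℤ)*s ∈ Finset.Icc (0 : ℤ) ((2 * n : ℕ):ℤ) := by
      rw [Finset.mem_Icc]
      have hs0 : (0:ℤ) ≤ s := by omega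
      constructor
      · exact mul_nonneg (Int.natCast_nonneg j) hs0
      · have hj1 : (j:ℤ) ≤ (m:ℤ) := by omega
        have h1 : (j:ℤ)*s ≤ (m:ℤ)*s := mul_le_mul_of_nonneg_right hj1 hs0
        have h2 : (m:ℤ)*s ≤ (m:ℤ)*N := mul_le_mul_of_nonneg_left hsN (Int.natCast_nonneg m)
        calc (j:ℤ)*s ≤ (m:ℤ)*N := le_trans h1 h2
          _ ≤ ((2*n : ℕ):ℤ) := by rw [hN_def] at hsizeZ ⊢; exact hsizeZ
    obtain ⟨x, hx⟩ := hCk ((j:ℤ)*s) hk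
    rw [Finset.mem_inter, Finset.mem_image] at hx
    obtain ⟨⟨c, hcC, hcx⟩, hxT⟩ := hx
    refine ⟨c, ?_⟩
    rw [Finset.mem_inter]
    refine ⟨hcC, ?_⟩
    rw [hSf_def]
    simp only [Finset.mem_inter, Finset.mem_image]
    constructor
    · exact ⟨x, hxT, by omega⟩
    · exact (Finset.mem_powerset.1 hCU) hcC
  -- apply counting lemma
  have hcount := count_le t L U hLsub hLcard hLpair
  have hLlen : L.length = m := by rw [hL_def, List.length_map, List.length_range]
  have hUcard : U.card = 2*n := by
    rw [hU_def, Int.card_Icc]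
    omega
  have hmain : ((U.powerset.filter (fun C : Finset ℤ =>
          ∀ k ∈ Finset.Icc (0 : ℤ) ((2 * n : ℕ):ℤ),
            ((C.image (fun c => c + k)) ∩ T).Nonempty)).card : ℝ)
      ≤ (1 - (2:ℝ)⁻¹ ^ t) ^ m * 2 ^ (2*n) := by
    calc ((U.powerset.filter _).card : ℝ)
        ≤ ((U.powerset.filter (fun C => ∀ S ∈ L, (C ∩ S).Nonempty)).card : ℝ) := by
          exact_mod_cast Finset.card_le_card hsubfilter
      _ ≤ (1 - (2:ℝ)⁻¹ ^ t) ^ L.length * 2 ^ U.card := hcount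
      _ = (1 - (2:ℝ)⁻¹ ^ t) ^ m * 2 ^ (2*n) := by rw [hLlen, hUcard]
  -- analytic finish
  have hx01 : (2:ℝ)⁻¹ ^ t ≤ 1 := by
    apply pow_le_one₀ <;> norm_num
  have hxpos : (0:ℝ) < (2:ℝ)⁻¹ ^ t := by positivity
  have h2t : (2:ℝ) ^ t ≤ (n:ℝ) ^ (Real.log 2 / 4) := by
    have e1 : (2:ℝ) ^ t = Real.exp ((t:ℝ) * Real.log 2) := by
      rw [← Real.rpow_natCast 2 t, Real.rpow_def_of_pos (by norm_num), mul_comm]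
    have e2 : (n:ℝ) ^ (Real.log 2 / 4) = Real.exp ((Real.log 2 / 4) * Real.log n) := by
      rw [Real.rpow_def_of_pos hn0R]; congr 1; ring
    rw [e1, e2]
    apply Real.exp_le_exp.2
    have hl2 : (0:ℝ) ≤ Real.log 2 := Real.log_nonneg (by norm_num)
    nlinarith
  have hm2t : (n:ℝ) ^ ((1:ℝ)/4) ≤ (m:ℝ) * (2:ℝ)⁻¹ ^ t := by
    have hinv : ((n:ℝ) ^ (Real.log 2 / 4))⁻¹ ≤ (2:ℝ)⁻¹ ^ t := by
      rw [inv_pow]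
      apply inv_anti₀ (by positivity) h2t
    have hrw : (n:ℝ)^((9:ℝ)/20) * ((n:ℝ) ^ (Real.log 2 / 4))⁻¹
        = (n:ℝ)^((9:ℝ)/20 - Real.log 2 / 4) := by
      rw [Real.rpow_sub hn0R]; exact (div_eq_mul_inv _ _).symm
    calc (n:ℝ) ^ ((1:ℝ)/4) ≤ (n:ℝ)^((9:ℝ)/20 - Real.log 2 / 4) := by
          apply Real.rpow_le_rpow_of_exponent_le hn1R
          have := Real.log_two_lt_d9
          norm_num
          linarith
      _ = (n:ℝ)^((9:ℝ)/20) * ((n:ℝ) ^ (Real.log 2 / 4))⁻¹ := hrw.symm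
      _ ≤ (m:ℝ) * (2:ℝ)⁻¹ ^ t := by
          apply mul_le_mul hmlow hinv (by positivity) (Nat.cast_nonneg _)
  have hexp : (1 - (2:ℝ)⁻¹ ^ t) ^ m ≤ Real.exp (-(n:ℝ) ^ ((1:ℝ)/4)) := by
    have h1 : (1 - (2:ℝ)⁻¹ ^ t) ≤ Real.exp (-(2:ℝ)⁻¹ ^ t) := by
      have := Real.add_one_le_exp (-(2:ℝ)⁻¹ ^ t)
      linarith
    calc (1 - (2:ℝ)⁻¹ ^ t) ^ m ≤ (Real.exp (-(2:ℝ)⁻¹ ^ t)) ^ m := by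
          apply pow_le_pow_left₀ (by linarith) h1
      _ = Real.exp ((m:ℝ) * (-(2:ℝ)⁻¹ ^ t)) := by
          rw [← Real.exp_nat_mul]
      _ ≤ Real.exp (-(n:ℝ) ^ ((1:ℝ)/4)) := by
          apply Real.exp_le_exp.2
          nlinarith
  calc ((((Finset.Icc (1 : ℤ) (2 * n : ℕ)).powerset.filter (fun C : Finset ℤ =>
          ∀ k ∈ Finset.Icc (0 : ℤ) (2 * n : ℕ),
            ((C.image (fun c => c + k)) ∩ T).Nonempty)).card : ℝ))
      ≤ (1 - (2:ℝ)⁻¹ ^ t) ^ m * 2 ^ (2*n) := hmain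
    _ ≤ Real.exp (-(n:ℝ) ^ ((1:ℝ)/4)) * 2 ^ (2*n) := by
        apply mul_le_mul_of_nonneg_right hexp (by positivity)
    _ ≤ 2 * Real.exp (-(n : ℝ) ^ ((1 : ℝ) / 4)) * 2 ^ (2 * n) := by
        nlinarith [Real.exp_pos (-(n:ℝ) ^ ((1:ℝ)/4)), pow_pos (two_pos (α := ℝ)) (2*n)]
end

section
/- Let n ≥ 1, f, ℓ be positive integers with f ≤ ℓ, and let C ⊆ {1, 2, …, f} with |C| = n. Let r = (r₁, …, r_ℓ) be independent random variables, each uniformly distributed on [0, 1]. For each offset k ∈ {0, 1, …, ℓ − f}, let M_k(r) := {s ∈ C + k : r_s = min_{s′ ∈ C + k} r_{s′}} be the set of minimizers of r over C + k, and let T(r) := ⋃_{k=0}^{ℓ−f} M_k(r). Then the expected value of |T(r)| is at most ℓ·(1 + ln n)/n. -/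
open MeasureTheory

/-- The value assigned to pillar position `s ∈ {1, …, ℓ}` by the random vector `ω`. -/
noncomputable def pillarValue (ℓ : ℕ) (ω : Fin ℓ → ℝ) (s : ℤ) : ℝ :=
  if h : 1 ≤ s ∧ s ≤ (ℓ : ℤ) then ω ⟨(s - 1).toNat, by omega⟩ else 0

open scoped Classical in
/-- `M_k(ω)`: the set of positions of `C + k` on which the random value is minimal. -/
noncomputable def minimizers (ℓ : ℕ) (C : Finset ℤ) (k : ℤ) (ω : Fin ℓ → ℝ) : Finset ℤ :=
  (C.image (fun c => c + k)).filter
    (fun s => ∀ t ∈ C.image (fun c => c + k), pillarValue ℓ ω s ≤ pillarValue ℓ ω t)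

/-- The min-hash track `T(ω) = ⋃_{k=0}^{ℓ-f} M_k(ω)`. -/
noncomputable def minHashTrack (ℓ f : ℕ) (C : Finset ℤ) (ω : Fin ℓ → ℝ) : Finset ℤ :=
  (Finset.Icc (0 : ℤ) ((ℓ : ℤ) - (f : ℤ))).biUnion (fun k => minimizers ℓ C k ω)


open MeasureTheory Set
open scoped ENNReal

noncomputable def P0 : Measure ℝ := volume.restrict (Set.Icc 0 1)

instance : IsProbabilityMeasure P0 := ⟨by simp [P0, Real.volume_Icc]⟩

lemma meas_f {L : ℕ} (x : ℝ) (i : Fin L) (S : Finset (Fin L)) :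
    Measurable (fun ω : Fin L → ℝ => if x ≤ ω i ∧ ∀ t ∈ S, ω i ≤ ω t then (1:ℝ≥0∞) else 0) := by
  have hset : MeasurableSet {ω : Fin L → ℝ | x ≤ ω i ∧ ∀ t ∈ S, ω i ≤ ω t} := by
    have : {ω : Fin L → ℝ | x ≤ ω i ∧ ∀ t ∈ S, ω i ≤ ω t}
        = {ω : Fin L → ℝ | x ≤ ω i} ∩ ⋂ t ∈ S, {ω | ω i ≤ ω t} := by
      ext ω; simp
    rw [this]
    exact (measurableSet_le measurable_const (measurable_pi_apply i)).inter
      (MeasurableSet.biInter (S.countable_toSet) fun t _ =>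
        measurableSet_le (measurable_pi_apply i) (measurable_pi_apply t))
  exact Measurable.ite hset measurable_const measurable_const

lemma ind_ne_top {p : Prop} [Decidable p] : (if p then (1:ℝ≥0∞) else 0) ≠ ⊤ := by
  split <;> simp

lemma lintegral_ind_Ici (c : ℝ) : ∫⁻ v : ℝ, (if c ≤ v then (1:ℝ≥0∞) else 0) ∂P0 = P0 (Ici c) := by
  have : (fun v : ℝ => if c ≤ v then (1:ℝ≥0∞) else 0) = (Ici c).indicator (fun _ => 1) := by
    ext v; simp [Set.indicator_apply]
  rw [this]
  exact lintegral_indicator_one measurableSet_Ici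

lemma lmarg {L : ℕ} (x : ℝ) (i : Fin L) (A : Finset (Fin L)) :
    i ∉ A → ∀ (S : Finset (Fin L)), S ⊆ A → ∀ z : Fin L → ℝ,
      (∫⋯∫⁻_A, (fun ω => if x ≤ ω i ∧ ∀ t ∈ S, ω i ≤ ω t then (1:ℝ≥0∞) else 0)
          ∂(fun _ => P0)) z
        = (if x ≤ z i then 1 else 0) * (P0 (Set.Ici (z i)))^S.card := by
  induction A using Finset.induction with
  | empty =>
    intro _ S hS z
    rw [Finset.subset_empty] at hS; subst hS
    simp [lmarginal_empty]
  | @insert j A hjA ih =>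
    intro hiA S hS z
    have hij : i ≠ j := fun h => hiA (h ▸ Finset.mem_insert_self j A)
    have hiA' : i ∉ A := fun h => hiA (Finset.mem_insert_of_mem h)
    rw [lmarginal_insert _ (meas_f x i S) hjA]
    by_cases hjS : j ∈ S
    · set S' := S.erase j with hS'
      have hjS' : j ∉ S' := Finset.notMem_erase _ _
      have hins : insert j S' = S := Finset.insert_erase hjS
      have hS'A : S' ⊆ A := by
        intro t ht
        rcases Finset.mem_insert.mp (hS (Finset.mem_of_mem_erase ht)) with h | h
        · exact absurd h (Finset.ne_of_mem_erase ht)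
        · exact h
      have hfsplit : ∀ ω : Fin L → ℝ,
          (if x ≤ ω i ∧ ∀ t ∈ S, ω i ≤ ω t then (1:ℝ≥0∞) else 0)
            = (if x ≤ ω i ∧ ∀ t ∈ S', ω i ≤ ω t then (1:ℝ≥0∞) else 0)
              * (if ω i ≤ ω j then 1 else 0) := by
        intro ω
        rw [← hins]
        by_cases h1 : x ≤ ω i <;> by_cases h2 : ω i ≤ ω j <;>
          by_cases h3 : ∀ t ∈ S', ω i ≤ ω t <;>
          simp [h1, h2, h3, Finset.forall_mem_insert]
      have key : ∀ v : ℝ,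
          (∫⋯∫⁻_A, (fun ω => if x ≤ ω i ∧ ∀ t ∈ S, ω i ≤ ω t then (1:ℝ≥0∞) else 0)
              ∂(fun _ => P0)) (Function.update z j v)
            = ((if x ≤ z i then 1 else 0) * (P0 (Set.Ici (z i)))^S'.card)
              * (if z i ≤ v then 1 else 0) := by
        intro v
        simp only [lmarginal]
        have hval : ∀ y : (a : A) → ℝ,
            (Function.updateFinset (Function.update z j v) A y) i = z i := by
          intro y
          simp only [Function.updateFinset]
          rw [dif_neg hiA', Function.update_of_ne hij]
        have hvalj : ∀ y : (a : A) → ℝ,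
            (Function.updateFinset (Function.update z j v) A y) j = v := by
          intro y
          simp only [Function.updateFinset]
          rw [dif_neg hjA, Function.update_self]
        have hrw : ∀ y : (a : A) → ℝ,
            (fun ω => if x ≤ ω i ∧ ∀ t ∈ S, ω i ≤ ω t then (1:ℝ≥0∞) else 0)
              (Function.updateFinset (Function.update z j v) A y)
            = (fun ω => if x ≤ ω i ∧ ∀ t ∈ S', ω i ≤ ω t then (1:ℝ≥0∞) else 0)
              (Function.updateFinset (Function.update z j v) A y)
              * (if z i ≤ v then 1 else 0) := by
          intro y
          dsimp only
          rw [hfsplit, hval, hvalj]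
        simp_rw [hrw]
        rw [lintegral_mul_const' _ _ ind_ne_top]
        have := ih hiA' S' hS'A (Function.update z j v)
        simp only [lmarginal] at this
        rw [this, Function.update_of_ne hij]
      simp_rw [key]
      rw [lintegral_const_mul' _ _ (ENNReal.mul_ne_top ind_ne_top
        (ENNReal.pow_ne_top (measure_ne_top P0 _))), lintegral_ind_Ici]
      rw [← hins, Finset.card_insert_of_notMem hjS', pow_succ, mul_assoc]
    · have hSA : S ⊆ A := by
        intro t ht
        rcases Finset.mem_insert.mp (hS ht) with h | h
        · exact absurd (h ▸ ht) hjS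
        · exact h
      have key : ∀ v : ℝ,
          (∫⋯∫⁻_A, (fun ω => if x ≤ ω i ∧ ∀ t ∈ S, ω i ≤ ω t then (1:ℝ≥0∞) else 0)
              ∂(fun _ => P0)) (Function.update z j v)
            = (if x ≤ z i then 1 else 0) * (P0 (Set.Ici (z i)))^S.card := by
        intro v
        rw [ih hiA' S hSA, Function.update_of_ne hij]
      simp_rw [key]
      rw [lintegral_const]
      simp

lemma measure_min_event {L : ℕ} (i : Fin L) (S : Finset (Fin L)) (hiS : i ∉ S)
    (x : ℝ) (hx0 : 0 ≤ x) (hx1 : x ≤ 1) :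
    Measure.pi (fun _ : Fin L => P0) {ω | x ≤ ω i ∧ ∀ t ∈ S, ω i ≤ ω t}
      ≤ ENNReal.ofReal ((1-x)^(S.card+1)/(S.card+1)) := by
  have hE : MeasurableSet {ω : Fin L → ℝ | x ≤ ω i ∧ ∀ t ∈ S, ω i ≤ ω t} := by
    have : {ω : Fin L → ℝ | x ≤ ω i ∧ ∀ t ∈ S, ω i ≤ ω t}
        = {ω : Fin L → ℝ | x ≤ ω i} ∩ ⋂ t ∈ S, {ω | ω i ≤ ω t} := by
      ext ω; simp
    rw [this]
    exact (measurableSet_le measurable_const (measurable_pi_apply i)).inter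
      (MeasurableSet.biInter (S.countable_toSet) fun t _ =>
        measurableSet_le (measurable_pi_apply i) (measurable_pi_apply t))
  set m := S.card with hm
  -- measure as lintegral of the indicator written as an `ite`
  have h1 : Measure.pi (fun _ : Fin L => P0) {ω | x ≤ ω i ∧ ∀ t ∈ S, ω i ≤ ω t}
      = ∫⁻ ω, (if x ≤ ω i ∧ ∀ t ∈ S, ω i ≤ ω t then (1:ℝ≥0∞) else 0)
          ∂(Measure.pi (fun _ : Fin L => P0)) := by
    rw [← lintegral_indicator_one hE]
    apply lintegral_congr
    intro ω
    simp [Set.indicator_apply]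
  rw [h1, lintegral_eq_lmarginal_univ (fun _ => (0:ℝ))]
  rw [← Finset.insert_erase (Finset.mem_univ i),
    lmarginal_insert _ (meas_f x i S) (Finset.notMem_erase i _)]
  have hsub : S ⊆ Finset.univ.erase i := fun t ht =>
    Finset.mem_erase.mpr ⟨fun h => hiS (h ▸ ht), Finset.mem_univ t⟩
  have key : ∀ v : ℝ,
      (∫⋯∫⁻_(Finset.univ.erase i),
          (fun ω => if x ≤ ω i ∧ ∀ t ∈ S, ω i ≤ ω t then (1:ℝ≥0∞) else 0) ∂(fun _ => P0))
        (Function.update (fun _ => (0:ℝ)) i v)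
      = (if x ≤ v then 1 else 0) * (P0 (Set.Ici v))^m := by
    intro v
    rw [lmarg x i _ (Finset.notMem_erase i _) S hsub, Function.update_self]
  simp_rw [key]
  -- now a 1-dimensional estimate
  have hbound : ∀ v ∈ Set.Icc (0:ℝ) 1,
      (if x ≤ v then (1:ℝ≥0∞) else 0) * (P0 (Set.Ici v))^m
        ≤ ENNReal.ofReal (Set.indicator (Set.Ici x) (fun v => (1-v)^m) v) := by
    intro v hv
    by_cases hxv : x ≤ v
    · have hP : P0 (Set.Ici v) ≤ ENNReal.ofReal (1 - v) := by
        have hsub2 : Set.Icc (0:ℝ) 1 ∩ Set.Ici v ⊆ Set.Icc v 1 := by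
          intro w hw; exact ⟨hw.2, hw.1.2⟩
        calc P0 (Set.Ici v) = volume (Set.Icc (0:ℝ) 1 ∩ Set.Ici v) := by
              rw [P0, Measure.restrict_apply' measurableSet_Icc, Set.inter_comm]
          _ ≤ volume (Set.Icc v 1) := measure_mono hsub2
          _ = ENNReal.ofReal (1 - v) := Real.volume_Icc
      rw [if_pos hxv, one_mul, Set.indicator_of_mem (Set.mem_Ici.mpr hxv)]
      calc (P0 (Set.Ici v))^m ≤ (ENNReal.ofReal (1-v))^m := pow_le_pow_left' hP m
        _ = ENNReal.ofReal ((1-v)^m) := by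
            rw [ENNReal.ofReal_pow (by linarith [hv.2])]
    · rw [if_neg hxv, zero_mul]
      exact zero_le
  calc ∫⁻ v, (if x ≤ v then (1:ℝ≥0∞) else 0) * (P0 (Set.Ici v))^m ∂P0
      ≤ ∫⁻ v, ENNReal.ofReal (Set.indicator (Set.Ici x) (fun v => (1-v)^m) v) ∂P0 := by
        rw [P0]
        apply lintegral_mono_ae
        filter_upwards [ae_restrict_mem measurableSet_Icc] with v hv
        exact hbound v hv
    _ = ENNReal.ofReal (∫ v, Set.indicator (Set.Ici x) (fun v => (1-v)^m) v ∂P0) := by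
        rw [← ofReal_integral_eq_lintegral_ofReal]
        · rw [P0]
          apply Integrable.indicator _ measurableSet_Ici
          apply Continuous.integrableOn_Icc
          continuity
        · rw [P0]
          filter_upwards [ae_restrict_mem measurableSet_Icc] with v hv
          by_cases hvx : v ∈ Set.Ici x
          · rw [Set.indicator_of_mem hvx]
            exact pow_nonneg (by linarith [hv.2]) m
          · rw [Set.indicator_of_notMem hvx]
            exact le_rfl
    _ ≤ ENNReal.ofReal ((1-x)^(m+1)/(m+1)) := by
        apply ENNReal.ofReal_le_ofReal
        rw [P0, integral_indicator measurableSet_Ici, Measure.restrict_restrict measurableSet_Ici]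
        have : Set.Ici x ∩ Set.Icc (0:ℝ) 1 = Set.Icc x 1 := by
          ext v; simp only [Set.mem_inter_iff, Set.mem_Ici, Set.mem_Icc]
          constructor
          · rintro ⟨h1, h2, h3⟩; exact ⟨h1, h3⟩
          · rintro ⟨h1, h2⟩; exact ⟨h1, le_trans hx0 h1, h2⟩
        rw [this, MeasureTheory.integral_Icc_eq_integral_Ioc,
          ← intervalIntegral.integral_of_le hx1]
        have hcomp := intervalIntegral.integral_comp_sub_left (a := x) (b := 1)
          (fun u => u^m) 1
        rw [hcomp]
        simp only [sub_self]
        rw [integral_pow, zero_pow (Nat.succ_ne_zero m), sub_zero]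

lemma measure_coord_lt {L : ℕ} (i : Fin L) (x : ℝ) (hx0 : 0 ≤ x) :
    Measure.pi (fun _ : Fin L => P0) {ω | ω i < x} ≤ ENNReal.ofReal x := by
  classical
  have hset : {ω : Fin L → ℝ | ω i < x}
      = Set.pi Set.univ (fun j => if j = i then Set.Iio x else Set.univ) := by
    ext ω
    simp only [Set.mem_setOf_eq, Set.mem_pi, Set.mem_univ, forall_true_left]
    constructor
    · intro h j
      by_cases hj : j = i
      · subst hj; rw [if_pos rfl]; exact h
      · rw [if_neg hj]; trivial
    · intro h
      have := h i
      rwa [if_pos rfl] at this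
  rw [hset, Measure.pi_pi]
  have : ∀ j : Fin L, P0 (if j = i then Set.Iio x else Set.univ)
      = if j = i then P0 (Set.Iio x) else 1 := by
    intro j; by_cases hj : j = i <;> simp [hj]
  simp_rw [this]
  rw [Finset.prod_ite_eq' Finset.univ i (fun _ => P0 (Set.Iio x)), if_pos (Finset.mem_univ i)]
  have : P0 (Set.Iio x) ≤ volume (Set.Icc (0:ℝ) x) := by
    rw [P0, Measure.restrict_apply' measurableSet_Icc]
    apply measure_mono
    intro w hw
    exact ⟨hw.2.1, le_of_lt hw.1⟩
  calc P0 (Set.Iio x) ≤ volume (Set.Icc (0:ℝ) x) := this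
    _ = ENNReal.ofReal x := by rw [Real.volume_Icc, sub_zero]

lemma analytic_bound (n : ℕ) (hn : 1 ≤ n) :
    (1 - Real.exp (-Real.log n / (n - 1))) + (Real.exp (-Real.log n / (n - 1)))^n
      ≤ (1 + Real.log n) / n := by
  rcases eq_or_lt_of_le hn with h | h
  · subst h
    simp
  · have hn2 : 2 ≤ n := h
    have hN2 : (2:ℝ) ≤ (n:ℝ) := by exact_mod_cast hn2
    have hNpos : (0:ℝ) < n := by linarith
    have hNne : (n:ℝ) - 1 ≠ 0 := by linarith
    have hlog : 0 ≤ Real.log n := Real.log_nonneg (by linarith)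
    set y : ℝ := Real.exp (-Real.log n / ((n:ℝ) - 1)) with hy
    have hypos : 0 < y := Real.exp_pos _
    have hyn1 : y ^ (n - 1) = 1 / (n:ℝ) := by
      rw [hy, ← Real.exp_nat_mul]
      have hcast : (↑(n-1) : ℝ) = (n:ℝ) - 1 := by
        push_cast [Nat.cast_sub hn]; ring
      rw [hcast, mul_div_assoc', mul_comm, mul_div_assoc, div_self hNne, mul_one,
        Real.exp_neg, Real.exp_log hNpos, one_div]
    have hyn : y ^ n = y / n := by
      conv_lhs => rw [show n = (n-1)+1 from by omega]
      rw [pow_succ, hyn1]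
      ring
    have h2 : ((n:ℝ) - 1) - Real.log n ≤ ((n:ℝ) - 1) * y := by
      have hexp : (-Real.log n / ((n:ℝ) - 1)) + 1 ≤ y := Real.add_one_le_exp _
      have := mul_le_mul_of_nonneg_left hexp (by linarith : (0:ℝ) ≤ (n:ℝ) - 1)
      calc ((n:ℝ) - 1) - Real.log n
          = ((n:ℝ) - 1) * ((-Real.log n / ((n:ℝ) - 1)) + 1) := by
            field_simp
            ring
        _ ≤ ((n:ℝ) - 1) * y := this
    rw [hyn, le_div_iff₀ hNpos]
    have hyN : (y/(n:ℝ))*(n:ℝ) = y := div_mul_cancel₀ y hNpos.ne'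
    nlinarith [h2]

lemma measure_min_event' {L n : ℕ} (i : Fin L) (S : Finset (Fin L)) (hiS : i ∉ S)
    (x : ℝ) (hx0 : 0 ≤ x) (hx1 : x ≤ 1) (hcard : S.card + 1 = n) :
    Measure.pi (fun _ : Fin L => P0) {ω | x ≤ ω i ∧ ∀ t ∈ S, ω i ≤ ω t}
      ≤ ENNReal.ofReal ((1-x)^n/n) := by
  have h := measure_min_event i S hiS x hx0 hx1
  have e1 : ((S.card : ℝ) + 1) = (n:ℝ) := by exact_mod_cast hcard
  rw [hcard, e1] at h
  exact h

/-- **Min-hash expected track size.** With `r₁, …, r_ℓ` i.i.d. uniform on `[0,1]`, the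
expected size of the min-hash track is at most `ℓ·(1 + ln n)/n`. -/
theorem minhash_expected_track_size (n f ℓ : ℕ) (hn : 1 ≤ n) (hf : 0 < f) (hℓ : 0 < ℓ)
    (hfl : f ≤ ℓ) (C : Finset ℤ) (hC : C ⊆ Finset.Icc 1 (f : ℤ)) (hCcard : C.card = n) :
    ∫ ω, ((minHashTrack ℓ f C ω).card : ℝ)
        ∂(Measure.pi (fun _ : Fin ℓ => volume.restrict (Set.Icc (0 : ℝ) 1)))
      ≤ (ℓ : ℝ) * (1 + Real.log n) / n := by
  classical
  have hμeq : (Measure.pi (fun _ : Fin ℓ => volume.restrict (Set.Icc (0 : ℝ) 1)))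
      = Measure.pi (fun _ : Fin ℓ => P0) := rfl
  rw [hμeq]
  set μ := Measure.pi (fun _ : Fin ℓ => P0) with hμ
  -- the index map
  set idx : ℤ → Fin ℓ := fun t =>
    if h : 1 ≤ t ∧ t ≤ (ℓ:ℤ) then ⟨(t-1).toNat, by omega⟩ else ⟨0, hℓ⟩ with hidxdef
  have hpv : ∀ (ω : Fin ℓ → ℝ) (t : ℤ), 1 ≤ t → t ≤ (ℓ:ℤ) →
      pillarValue ℓ ω t = ω (idx t) := by
    intro ω t h1 h2
    rw [pillarValue, dif_pos ⟨h1, h2⟩, hidxdef]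
    simp only [dif_pos (⟨h1, h2⟩ : 1 ≤ t ∧ t ≤ (ℓ:ℤ))]
  have hidxinj : ∀ t t' : ℤ, 1 ≤ t → t ≤ (ℓ:ℤ) → 1 ≤ t' → t' ≤ (ℓ:ℤ) →
      idx t = idx t' → t = t' := by
    intro t t' h1 h2 h3 h4 heq
    rw [hidxdef] at heq
    simp only [dif_pos (⟨h1, h2⟩ : 1 ≤ t ∧ t ≤ (ℓ:ℤ)),
      dif_pos (⟨h3, h4⟩ : 1 ≤ t' ∧ t' ≤ (ℓ:ℤ)), Fin.mk.injEq] at heq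
    omega
  -- the track is contained in [1, ℓ]
  have hrange : ∀ k ∈ Finset.Icc (0:ℤ) ((ℓ:ℤ)-(f:ℤ)), ∀ t ∈ C.image (fun c => c + k),
      1 ≤ t ∧ t ≤ (ℓ:ℤ) := by
    intro k hk t ht
    rw [Finset.mem_Icc] at hk
    obtain ⟨c, hc, rfl⟩ := Finset.mem_image.mp ht
    have := Finset.mem_Icc.mp (hC hc)
    omega
  have hTsub : ∀ ω, minHashTrack ℓ f C ω ⊆ Finset.Icc 1 (ℓ:ℤ) := by
    intro ω s hs
    obtain ⟨k, hk, hmem⟩ := Finset.mem_biUnion.mp hs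
    have himg := (Finset.mem_filter.mp hmem).1
    rw [Finset.mem_Icc]
    exact hrange k hk s himg
  set A : ℤ → Set (Fin ℓ → ℝ) := fun s => {ω | s ∈ minHashTrack ℓ f C ω} with hA
  have hpvmeas : ∀ t : ℤ, Measurable (fun ω : Fin ℓ → ℝ => pillarValue ℓ ω t) := by
    intro t
    unfold pillarValue
    by_cases h : 1 ≤ t ∧ t ≤ (ℓ:ℤ)
    · simp only [dif_pos h]; exact measurable_pi_apply _
    · simp only [dif_neg h]; exact measurable_const
  have hAmeas : ∀ s : ℤ, MeasurableSet (A s) := by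
    intro s
    have hrw : A s = ⋃ k ∈ (Finset.Icc (0:ℤ) ((ℓ:ℤ)-(f:ℤ))),
        ({ω : Fin ℓ → ℝ | s ∈ C.image (fun c => c + k)} ∩
          ⋂ t ∈ C.image (fun c => c + k), {ω | pillarValue ℓ ω s ≤ pillarValue ℓ ω t}) := by
      ext ω
      simp only [hA, Set.mem_setOf_eq, minHashTrack, Finset.mem_biUnion, minimizers,
        Finset.mem_filter, Set.mem_iUnion, Set.mem_inter_iff, Set.mem_iInter]
      constructor
      · rintro ⟨k, hk, h1, h2⟩; exact ⟨k, hk, h1, h2⟩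
      · rintro ⟨k, hk, h1, h2⟩; exact ⟨k, hk, h1, h2⟩
    rw [hrw]
    apply MeasurableSet.biUnion (Finset.countable_toSet _)
    intro k _
    apply MeasurableSet.inter
    · by_cases h : s ∈ C.image (fun c => c + k)
      · simp only [h]; simp
      · simp only [h]; simp
    · exact MeasurableSet.biInter (Finset.countable_toSet _) fun t _ =>
        measurableSet_le (hpvmeas s) (hpvmeas t)
  -- the threshold
  set xstar : ℝ := 1 - Real.exp (-Real.log n / ((n:ℝ) - 1)) with hxstar
  have hNR : (1:ℝ) ≤ (n:ℝ) := by exact_mod_cast hn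
  have hexp_le_one : Real.exp (-Real.log n / ((n:ℝ) - 1)) ≤ 1 := by
    rw [Real.exp_le_one_iff]
    apply div_nonpos_of_nonpos_of_nonneg
    · simp [Real.log_nonneg hNR]
    · linarith
  have hx0 : 0 ≤ xstar := by rw [hxstar]; linarith
  have hx1 : xstar ≤ 1 := by
    rw [hxstar]
    have := Real.exp_pos (-Real.log n / ((n:ℝ) - 1))
    linarith
  have hrhs0 : 0 ≤ (1 + Real.log n) / (n:ℝ) := by
    apply div_nonneg _ (by linarith)
    have := Real.log_nonneg hNR
    linarith
  -- per-position bound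
  have hs_bound : ∀ s ∈ Finset.Icc (1:ℤ) (ℓ:ℤ), μ (A s) ≤ ENNReal.ofReal ((1 + Real.log n) / n) := by
    intro s hs
    rw [Finset.mem_Icc] at hs
    set i : Fin ℓ := idx s with hi
    set K := (Finset.Icc (0:ℤ) ((ℓ:ℤ)-(f:ℤ))).filter (fun k => s - k ∈ C) with hK
    set Sk : ℤ → Finset (Fin ℓ) :=
      fun k => ((C.image (fun c => c + k)).erase s).image idx with hSkdef
    have hsub : A s ⊆ {ω : Fin ℓ → ℝ | ω i < xstar} ∪
        ⋃ k ∈ K, {ω : Fin ℓ → ℝ | xstar ≤ ω i ∧ ∀ j ∈ Sk k, ω i ≤ ω j} := by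
      intro ω hω
      obtain ⟨k, hk, hmem⟩ := Finset.mem_biUnion.mp hω
      obtain ⟨himg, hmin⟩ := Finset.mem_filter.mp hmem
      have hkK : k ∈ K := by
        obtain ⟨c, hcC, hck⟩ := Finset.mem_image.mp himg
        rw [hK, Finset.mem_filter]
        exact ⟨hk, by rw [show s - k = c by omega]; exact hcC⟩
      by_cases hB : ω i < xstar
      · exact Or.inl hB
      · right
        apply Set.mem_biUnion hkK
        refine ⟨le_of_not_gt hB, ?_⟩
        intro j hj
        obtain ⟨t, ht, rfl⟩ := Finset.mem_image.mp hj
        have htimg : t ∈ C.image (fun c => c + k) := Finset.mem_of_mem_erase ht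
        have htr := hrange k hk t htimg
        have := hmin t htimg
        rw [hpv ω s hs.1 hs.2, hpv ω t htr.1 htr.2] at this
        exact this
    have hiSk : ∀ k ∈ K, i ∉ Sk k := by
      intro k hkK hmem
      have hk : k ∈ Finset.Icc (0:ℤ) ((ℓ:ℤ)-(f:ℤ)) := (Finset.mem_filter.mp hkK).1
      obtain ⟨t, ht, hti⟩ := Finset.mem_image.mp hmem
      have htr := hrange k hk t (Finset.mem_of_mem_erase ht)
      have : t = s := hidxinj t s htr.1 htr.2 hs.1 hs.2 (by rw [hti, hi])
      exact Finset.ne_of_mem_erase ht this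
    have hperk : ∀ k ∈ K, μ {ω : Fin ℓ → ℝ | xstar ≤ ω i ∧ ∀ j ∈ Sk k, ω i ≤ ω j}
        ≤ ENNReal.ofReal ((1-xstar)^n / n) := by
      intro k hkK
      obtain ⟨hk, hskC⟩ := Finset.mem_filter.mp hkK
      have hsmem : s ∈ C.image (fun c => c + k) :=
        Finset.mem_image.mpr ⟨s - k, hskC, by ring⟩
      have hcard1 : (C.image (fun c => c + k)).card = n := by
        rw [Finset.card_image_of_injective _ (add_left_injective k), hCcard]
      have hinj : Set.InjOn idx ((C.image (fun c => c + k)).erase s) := by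
        intro a ha b hb hab
        have har := hrange k hk a (Finset.mem_of_mem_erase ha)
        have hbr := hrange k hk b (Finset.mem_of_mem_erase hb)
        exact hidxinj a b har.1 har.2 hbr.1 hbr.2 hab
      have hcard : (Sk k).card + 1 = n := by
        rw [hSkdef]
        simp only []
        rw [Finset.card_image_of_injOn hinj, Finset.card_erase_of_mem hsmem, hcard1]
        omega
      exact measure_min_event' i (Sk k) (hiSk k hkK) xstar hx0 hx1 hcard
    have hKcard : K.card ≤ n := by
      rw [← hCcard]
      apply Finset.card_le_card_of_injOn (fun k => s - k)
      · intro k hk; exact (Finset.mem_filter.mp hk).2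
      · intro a _ b _ hab
        simp only [] at hab
        omega
    have hynn : (0:ℝ) ≤ 1 - xstar := by linarith
    have hnne : (n:ℝ) ≠ 0 := by positivity
    calc μ (A s)
        ≤ μ ({ω : Fin ℓ → ℝ | ω i < xstar} ∪
            ⋃ k ∈ K, {ω : Fin ℓ → ℝ | xstar ≤ ω i ∧ ∀ j ∈ Sk k, ω i ≤ ω j}) :=
          measure_mono hsub
      _ ≤ μ {ω : Fin ℓ → ℝ | ω i < xstar} +
            μ (⋃ k ∈ K, {ω : Fin ℓ → ℝ | xstar ≤ ω i ∧ ∀ j ∈ Sk k, ω i ≤ ω j}) :=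
          measure_union_le _ _
      _ ≤ ENNReal.ofReal xstar +
            ∑ k ∈ K, μ {ω : Fin ℓ → ℝ | xstar ≤ ω i ∧ ∀ j ∈ Sk k, ω i ≤ ω j} :=
          add_le_add (measure_coord_lt i xstar hx0) (measure_biUnion_finset_le _ _)
      _ ≤ ENNReal.ofReal xstar + ∑ k ∈ K, ENNReal.ofReal ((1-xstar)^n/n) :=
          add_le_add le_rfl (Finset.sum_le_sum hperk)
      _ ≤ ENNReal.ofReal xstar + ENNReal.ofReal ((1-xstar)^n) := by
          apply add_le_add le_rfl
          rw [Finset.sum_const, nsmul_eq_mul]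
          calc (K.card : ℝ≥0∞) * ENNReal.ofReal ((1-xstar)^n/n)
              ≤ (n : ℝ≥0∞) * ENNReal.ofReal ((1-xstar)^n/n) :=
                mul_le_mul_left (Nat.cast_le.mpr hKcard) _
            _ = ENNReal.ofReal ((1-xstar)^n) := by
                rw [← ENNReal.ofReal_natCast n, ← ENNReal.ofReal_mul (by positivity)]
                congr 1
                field_simp
      _ = ENNReal.ofReal (xstar + (1-xstar)^n) :=
          (ENNReal.ofReal_add hx0 (pow_nonneg hynn n)).symm
      _ ≤ ENNReal.ofReal ((1 + Real.log n)/n) := by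
          apply ENNReal.ofReal_le_ofReal
          have h1x : 1 - xstar = Real.exp (-Real.log n/((n:ℝ)-1)) := by
            rw [hxstar]; ring
          rw [h1x, hxstar]
          exact analytic_bound n hn
  -- put everything together
  have hcardsum : ∀ ω, ((minHashTrack ℓ f C ω).card : ℝ)
      = ∑ s ∈ Finset.Icc (1:ℤ) (ℓ:ℤ), Set.indicator (A s) (fun _ => (1:ℝ)) ω := by
    intro ω
    have h1 : ∑ s ∈ Finset.Icc (1:ℤ) (ℓ:ℤ), Set.indicator (A s) (fun _ => (1:ℝ)) ω
        = ∑ s ∈ Finset.Icc (1:ℤ) (ℓ:ℤ), (if s ∈ minHashTrack ℓ f C ω then (1:ℝ) else 0) := by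
      apply Finset.sum_congr rfl
      intro s _
      by_cases h : s ∈ minHashTrack ℓ f C ω <;> simp [hA, Set.indicator_apply, h]
    rw [h1, Finset.sum_boole]
    congr 1
    have h2 : Finset.filter (fun s => s ∈ minHashTrack ℓ f C ω) (Finset.Icc (1:ℤ) (ℓ:ℤ))
        = minHashTrack ℓ f C ω := by
      rw [Finset.filter_mem_eq_inter, Finset.inter_eq_right.mpr (hTsub ω)]
    rw [h2]
  have hint : ∀ s : ℤ, Integrable (Set.indicator (A s) (fun _ => (1:ℝ))) μ :=
    fun s => (integrable_const 1).indicator (hAmeas s)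
  calc ∫ ω, ((minHashTrack ℓ f C ω).card : ℝ) ∂μ
      = ∑ s ∈ Finset.Icc (1:ℤ) (ℓ:ℤ), ∫ ω, Set.indicator (A s) (fun _ => (1:ℝ)) ω ∂μ := by
        rw [← integral_finset_sum _ (fun s _ => hint s)]
        exact integral_congr_ae (Filter.Eventually.of_forall hcardsum)
    _ = ∑ s ∈ Finset.Icc (1:ℤ) (ℓ:ℤ), (μ (A s)).toReal := by
        apply Finset.sum_congr rfl
        intro s _
        rw [integral_indicator_const (1:ℝ) (hAmeas s), smul_eq_mul, mul_one]
        rfl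
    _ ≤ ∑ s ∈ Finset.Icc (1:ℤ) (ℓ:ℤ), (1 + Real.log n)/n := by
        apply Finset.sum_le_sum
        intro s hs
        exact ENNReal.toReal_le_of_le_ofReal hrhs0 (hs_bound s hs)
    _ = (ℓ:ℝ) * ((1 + Real.log n)/n) := by
        rw [Finset.sum_const, nsmul_eq_mul]
        congr 1
        rw [Int.card_Icc]
        have : ((ℓ:ℤ) + 1 - 1).toNat = ℓ := by omega
        rw [this]
    _ = (ℓ:ℝ) * (1 + Real.log n)/n := by ring
end
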